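/- arXiv:1011.3251 — 9 statements merged into one kernel-verified Lean document; each statement's English description precedes it below -/
import Mathlib

section
/- Fix integers N ≥ 2 and 1 ≤ M < N. Let G : ℝ^N → (N×N real matrices) be a C¹ map with G(x) symmetric and invertible for every x. Let Ω₁, …, Ω_N : ℝ^N → ℝ^N be C¹ maps such that for every x the N×N matrix M(x) whose j-th row is Ω_j(x) is invertible. Let λ_{M+1}, …, λ_N : ℝ^N → ℝ be C¹ and set λ_j ≡ 0 for 1 ≤ j ≤ M. Define v : ℝ^N → ℝ^N by v(x) = M(x)⁻¹ λ(x), i.e. ⟨Ω_j(x), v(x)⟩ = λ_j(x) for all j; define p(x) = G(x) v(x), τ_k(x) = Σ_{j=1}^N v_j(x) (∂_{x_j} p_k(x) − ∂_{x_k} p_j(x)) for k = 1,…,N, and Λ(x) = (M(x)ᵀ)⁻¹ τ(x). Assume Λ_j(x) = 0 for all x ∈ ℝ^N and all j = M+1, …, N. Then every solution x : I → ℝ^N of ẋ = v(x) satisfies the constraints ⟨Ω_j(x(t)), ẋ(t)⟩ = 0 for j = 1, …, M and, for every k = 1, …, N and every t ∈ I, the Lagrange-type equations d/dt[ Σ_j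 G_{kj}(x(t)) ẋ_j(t) ] − ½ Σ_{i,j} (∂_{x_k} G_{ij})(x(t)) ẋ_i(t) ẋ_j(t) = ∂_{x_k}( ½⟨v, G v⟩ )(x(t)) + Σ_{j=1}^{M} Λ_j(x(t)) · (Ω_j(x(t)))_k. -/
open Real Set

noncomputable section

/-- Partial derivative of a scalar function on `ℝ^n` in the `k`-th coordinate direction. -/
def pd (n : ℕ) (k : Fin n) (f : (Fin n → ℝ) → ℝ) (x : Fin n → ℝ) : ℝ :=
  fderiv ℝ f x (Pi.single k 1)

lemma pd_mul {n : ℕ} {k : Fin n} {f g : (Fin n → ℝ) → ℝ} {x : Fin n → ℝ}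
    (hf : DifferentiableAt ℝ f x) (hg : DifferentiableAt ℝ g x) :
    pd n k (fun y => f y * g y) x = pd n k f x * g x + f x * pd n k g x := by
  simp only [pd, fderiv_fun_mul hf hg, ContinuousLinearMap.add_apply,
    ContinuousLinearMap.smul_apply, smul_eq_mul]
  ring

lemma pd_sum {n : ℕ} {k : Fin n} {ι : Type*} {s : Finset ι}
    {f : ι → (Fin n → ℝ) → ℝ} {x : Fin n → ℝ}
    (hf : ∀ i ∈ s, DifferentiableAt ℝ (f i) x) :
    pd n k (fun y => ∑ i ∈ s, f i y) x = ∑ i ∈ s, pd n k (f i) x := by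
  simp only [pd, fderiv_fun_sum hf, ContinuousLinearMap.coe_sum', Finset.sum_apply]

lemma pd_const_mul {n : ℕ} {k : Fin n} {f : (Fin n → ℝ) → ℝ} {x : Fin n → ℝ}
    (c : ℝ) (hf : DifferentiableAt ℝ f x) :
    pd n k (fun y => c * f y) x = c * pd n k f x := by
  simp only [pd, fderiv_const_mul hf c, ContinuousLinearMap.smul_apply, smul_eq_mul]

lemma fderiv_eq_sum_pd {n : ℕ} (f : (Fin n → ℝ) → ℝ) (x u : Fin n → ℝ) :
    fderiv ℝ f x u = ∑ j, u j * pd n j f x := by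
  have hu : u = ∑ j, u j • (Pi.single j 1 : Fin n → ℝ) := by
    funext i
    simp [Finset.sum_apply, Pi.single_apply]
  conv_lhs => rw [hu]
  rw [map_sum]
  simp [pd]

lemma key_alg (n : ℕ) (a g : Fin n → Fin n → ℝ) (w b c : Fin n → ℝ)
    (ha : ∀ i j, a i j = a j i) (hg : ∀ i j, g i j = g j i) :
    (1/2) * (∑ i, ∑ j, a i j * w i * w j)
      + (1/2) * (∑ i, ∑ j, ((b i * g i j + w i * a i j) * w j + (w i * g i j) * b j))
      + (∑ j, w j * (c j - ∑ i, (a j i * w i + g j i * b i)))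
    = ∑ j, w j * c j := by
  have hS' : (∑ i, ∑ j, ((b i * g i j + w i * a i j) * w j + (w i * g i j) * b j))
      = (∑ i, ∑ j, b i * g i j * w j) + (∑ i, ∑ j, a i j * w i * w j)
        + (∑ i, ∑ j, w i * g i j * b j) := by
    rw [← Finset.sum_add_distrib, ← Finset.sum_add_distrib]
    refine Finset.sum_congr rfl fun i _ => ?_
    rw [← Finset.sum_add_distrib, ← Finset.sum_add_distrib]
    exact Finset.sum_congr rfl fun j _ => by ring
  have h4 : (∑ i, ∑ j, w i * g i j * b j) = ∑ i, ∑ j, b i * g i j * w j := by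
    rw [Finset.sum_comm]
    exact Finset.sum_congr rfl fun i _ => Finset.sum_congr rfl fun j _ => by
      rw [hg j i]; ring
  have hT : (∑ j, w j * ∑ i, (a j i * w i + g j i * b i))
      = (∑ i, ∑ j, a i j * w i * w j) + (∑ i, ∑ j, b i * g i j * w j) := by
    have h5 : ∀ j, w j * ∑ i, (a j i * w i + g j i * b i)
        = ∑ i, (a j i * w i * w j + g j i * b i * w j) := fun j => by
      rw [Finset.mul_sum]
      exact Finset.sum_congr rfl fun i _ => by ring
    rw [Finset.sum_congr rfl fun j _ => h5 j, Finset.sum_comm, ← Finset.sum_add_distrib]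
    refine Finset.sum_congr rfl fun i _ => ?_
    rw [← Finset.sum_add_distrib]
    exact Finset.sum_congr rfl fun j _ => by rw [ha j i, hg j i]; ring
  have hsplit : (∑ j, w j * (c j - ∑ i, (a j i * w i + g j i * b i)))
      = (∑ j, w j * c j) - (∑ j, w j * ∑ i, (a j i * w i + g j i * b i)) := by
    rw [← Finset.sum_sub_distrib]
    exact Finset.sum_congr rfl fun j _ => by ring
  rw [hsplit, hS', h4, hT]
  ring

/-- Theorem 1 (Cartesian approach): the first-order system `ẋ = v(x)`, under the
conditions `Λ_j = 0` for `j > M`, is an invariant relationship of the second-order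
constrained Lagrangian equations. -/
theorem cartesian_approach_main
    (n m : ℕ) (hn : 2 ≤ n) (hm1 : 1 ≤ m) (hmn : m < n)
    -- the Riemann metric G, C¹, symmetric, invertible
    (G : (Fin n → ℝ) → Matrix (Fin n) (Fin n) ℝ)
    (hGC : ∀ i j, ContDiff ℝ 1 (fun x => G x i j))
    (hGsymm : ∀ x i j, G x i j = G x j i)
    (hGinv : ∀ x, (G x).det ≠ 0)
    -- the 1-forms Ω_j, C¹, with the matrix M(x) whose j-th row is Ω_j(x) invertible
    (Ω : Fin n → (Fin n → ℝ) → (Fin n → ℝ))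
    (hΩC : ∀ j, ContDiff ℝ 1 (Ω j))
    (hMinv : ∀ x, (Matrix.of fun j k => Ω j x k).det ≠ 0)
    -- the functions λ_j : zero for j ≤ M, C¹ for j > M
    (lam : Fin n → (Fin n → ℝ) → ℝ)
    (hlam0 : ∀ j : Fin n, (j : ℕ) < m → lam j = 0)
    (hlamC : ∀ j : Fin n, m ≤ (j : ℕ) → ContDiff ℝ 1 (lam j))
    -- the Cartesian vector field v = M(x)⁻¹ λ(x), i.e. ⟨Ω_j(x), v(x)⟩ = λ_j(x)
    (v : (Fin n → ℝ) → (Fin n → ℝ))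
    (hvC : ContDiff ℝ 1 v)
    (hv : ∀ x, ∀ j : Fin n, (∑ k, Ω j x k * v x k) = lam j x)
    -- the momentum p = G v
    (p : Fin n → (Fin n → ℝ) → ℝ)
    (hp : ∀ k x, p k x = ∑ j, G x k j * v x j)
    -- τ_k = Σ_j v_j (∂_j p_k − ∂_k p_j)
    (τ : Fin n → (Fin n → ℝ) → ℝ)
    (hτ : ∀ k x, τ k x = ∑ j, v x j * (pd n j (p k) x - pd n k (p j) x))
    -- Λ = (M(x)ᵀ)⁻¹ τ(x), i.e. Σ_j (Ω_j(x))_k Λ_j(x) = τ_k(x)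
    (Λ : Fin n → (Fin n → ℝ) → ℝ)
    (hΛ : ∀ x, ∀ k : Fin n, (∑ j, Ω j x k * Λ j x) = τ k x)
    -- the invariance condition Λ_j ≡ 0 for j > M
    (hΛ0 : ∀ x, ∀ j : Fin n, m ≤ (j : ℕ) → Λ j x = 0)
    -- a solution of ẋ = v(x) on an open interval
    (t₁ t₂ : ℝ) (x : ℝ → (Fin n → ℝ))
    (hx : ∀ t ∈ Ioo t₁ t₂, HasDerivAt x (v (x t)) t) :
    -- the constraints ⟨Ω_j(x(t)), ẋ(t)⟩ = 0 hold for j = 1,…,M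
    (∀ t ∈ Ioo t₁ t₂, ∀ j : Fin n, (j : ℕ) < m →
      (∑ k, Ω j (x t) k * v (x t) k) = 0) ∧
    -- and the Lagrange-type equations hold
    (∀ t ∈ Ioo t₁ t₂, ∀ k : Fin n,
      HasDerivAt (fun s => p k (x s))
        ((1 / 2) * ∑ i, ∑ j, pd n k (fun y => G y i j) (x t) * v (x t) i * v (x t) j
          + pd n k (fun y => (1 / 2) * ∑ i, ∑ j, v y i * G y i j * v y j) (x t)
          + ∑ j : Fin n, (if (j : ℕ) < m then Λ j (x t) * Ω j (x t) k else 0)) t) := by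
  have hvj : ∀ j : Fin n, ContDiff ℝ 1 (fun z => v z j) := fun j => (contDiff_pi.mp hvC) j
  have hpfun : ∀ j, p j = fun z => ∑ i, G z j i * v z i := fun j => funext (hp j)
  constructor
  · intro t ht j hj
    rw [hv (x t) j, hlam0 j hj]
    rfl
  · intro t ht k
    have hGd : ∀ i j, DifferentiableAt ℝ (fun z => G z i j) (x t) :=
      fun i j => ((hGC i j).differentiable one_ne_zero).differentiableAt
    have hvd : ∀ j, DifferentiableAt ℝ (fun z => v z j) (x t) :=
      fun j => ((hvj j).differentiable one_ne_zero).differentiableAt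
    -- expansion of the inner terms of the energy
    have e1 : ∀ i j : Fin n, pd n k (fun z => v z i * G z i j * v z j) (x t)
        = (pd n k (fun z => v z i) (x t) * G (x t) i j
            + v (x t) i * pd n k (fun z => G z i j) (x t)) * v (x t) j
          + (v (x t) i * G (x t) i j) * pd n k (fun z => v z j) (x t) := by
      intro i j
      have h2 : pd n k (fun z => v z i * G z i j) (x t)
          = pd n k (fun z => v z i) (x t) * G (x t) i j
            + v (x t) i * pd n k (fun z => G z i j) (x t) := pd_mul (hvd i) (hGd i j)
      have h3 : pd n k (fun z => v z i * G z i j * v z j) (x t)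
          = pd n k (fun z => v z i * G z i j) (x t) * v (x t) j
            + (v (x t) i * G (x t) i j) * pd n k (fun z => v z j) (x t) :=
        pd_mul ((hvd i).mul (hGd i j)) (hvd j)
      rw [h3, h2]
    have e2 : ∀ i : Fin n, pd n k (fun z => ∑ j, v z i * G z i j * v z j) (x t)
        = ∑ j, ((pd n k (fun z => v z i) (x t) * G (x t) i j
            + v (x t) i * pd n k (fun z => G z i j) (x t)) * v (x t) j
          + (v (x t) i * G (x t) i j) * pd n k (fun z => v z j) (x t)) := by
      intro i
      have h : pd n k (fun z => ∑ j, v z i * G z i j * v z j) (x t)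
          = ∑ j, pd n k (fun z => v z i * G z i j * v z j) (x t) :=
        pd_sum (fun j _ => ((hvd i).mul (hGd i j)).mul (hvd j))
      rw [h]
      exact Finset.sum_congr rfl fun j _ => e1 i j
    have e3 : pd n k (fun z => ∑ i, ∑ j, v z i * G z i j * v z j) (x t)
        = ∑ i, ∑ j, ((pd n k (fun z => v z i) (x t) * G (x t) i j
            + v (x t) i * pd n k (fun z => G z i j) (x t)) * v (x t) j
          + (v (x t) i * G (x t) i j) * pd n k (fun z => v z j) (x t)) := by
      have h : pd n k (fun z => ∑ i, ∑ j, v z i * G z i j * v z j) (x t)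
          = ∑ i, pd n k (fun z => ∑ j, v z i * G z i j * v z j) (x t) :=
        pd_sum (fun i _ => DifferentiableAt.fun_sum fun j _ => ((hvd i).mul (hGd i j)).mul (hvd j))
      rw [h]
      exact Finset.sum_congr rfl fun i _ => e2 i
    have e4 : pd n k (fun y => (1 / 2) * ∑ i, ∑ j, v y i * G y i j * v y j) (x t)
        = (1 / 2) * ∑ i, ∑ j, ((pd n k (fun z => v z i) (x t) * G (x t) i j
            + v (x t) i * pd n k (fun z => G z i j) (x t)) * v (x t) j
          + (v (x t) i * G (x t) i j) * pd n k (fun z => v z j) (x t)) := by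
      have h : pd n k (fun y => (1 / 2) * ∑ i, ∑ j, v y i * G y i j * v y j) (x t)
          = (1 / 2) * pd n k (fun z => ∑ i, ∑ j, v z i * G z i j * v z j) (x t) :=
        pd_const_mul _ (DifferentiableAt.fun_sum fun i _ =>
          DifferentiableAt.fun_sum fun j _ => ((hvd i).mul (hGd i j)).mul (hvd j))
      rw [h, e3]
    -- expansion of pd of p j
    have epj : ∀ j : Fin n, pd n k (p j) (x t)
        = ∑ i, (pd n k (fun z => G z j i) (x t) * v (x t) i
            + G (x t) j i * pd n k (fun z => v z i) (x t)) := by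
      intro j
      rw [hpfun j]
      have h : pd n k (fun z => ∑ i, G z j i * v z i) (x t)
          = ∑ i, pd n k (fun z => G z j i * v z i) (x t) :=
        pd_sum (fun i _ => (hGd j i).mul (hvd i))
      rw [h]
      exact Finset.sum_congr rfl fun i _ => pd_mul (hGd j i) (hvd i)
    have ha_symm : ∀ i j : Fin n, pd n k (fun z => G z i j) (x t)
        = pd n k (fun z => G z j i) (x t) := by
      intro i j
      have : (fun z => G z i j) = (fun z => G z j i) := funext fun z => hGsymm z i j
      rw [this]
    -- the reaction-force sum equals τ
    have hC : (∑ j : Fin n, (if (j : ℕ) < m then Λ j (x t) * Ω j (x t) k else 0))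
        = ∑ j, v (x t) j * (pd n j (p k) (x t) - pd n k (p j) (x t)) := by
      have h1 : ∀ j : Fin n, (if (j : ℕ) < m then Λ j (x t) * Ω j (x t) k else 0)
          = Ω j (x t) k * Λ j (x t) := by
        intro j
        by_cases h : (j : ℕ) < m
        · simp [h, mul_comm]
        · simp [h, hΛ0 (x t) j (le_of_not_gt h)]
      rw [Finset.sum_congr rfl fun j _ => h1 j, hΛ (x t) k, hτ k (x t)]
    -- differentiability and chain rule
    have hpkC : ContDiff ℝ 1 (p k) := by
      rw [hpfun k]
      exact ContDiff.sum fun i _ => (hGC k i).mul (hvj i)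
    have hder : HasDerivAt (fun s => p k (x s)) (fderiv ℝ (p k) (x t) (v (x t))) t :=
      (((hpkC.differentiable one_ne_zero) (x t)).hasFDerivAt).comp_hasDerivAt t (hx t ht)
    have hfd : fderiv ℝ (p k) (x t) (v (x t)) = ∑ j, v (x t) j * pd n j (p k) (x t) :=
      fderiv_eq_sum_pd _ _ _
    have hDval : ((1 / 2) * ∑ i, ∑ j, pd n k (fun y => G y i j) (x t) * v (x t) i * v (x t) j
          + pd n k (fun y => (1 / 2) * ∑ i, ∑ j, v y i * G y i j * v y j) (x t)
          + ∑ j : Fin n, (if (j : ℕ) < m then Λ j (x t) * Ω j (x t) k else 0))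
        = fderiv ℝ (p k) (x t) (v (x t)) := by
      rw [hfd, e4, hC]
      have hrw : ∀ j : Fin n, v (x t) j * (pd n j (p k) (x t) - pd n k (p j) (x t))
          = v (x t) j * (pd n j (p k) (x t)
            - ∑ i, (pd n k (fun z => G z j i) (x t) * v (x t) i
                + G (x t) j i * pd n k (fun z => v z i) (x t))) := fun j => by rw [epj j]
      rw [Finset.sum_congr rfl fun j _ => hrw j]
      exact key_alg n (fun i j => pd n k (fun z => G z i j) (x t))
        (fun i j => G (x t) i j) (fun i => v (x t) i)
        (fun i => pd n k (fun z => v z i) (x t)) (fun j => pd n j (p k) (x t))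
        ha_symm (fun i j => hGsymm (x t) i j)
    rw [hDval]
    exact hder
end
end

section
/- Let v : ℝ^N → ℝ^N be C¹ and define the Lagrangian L : ℝ^N × ℝ^N → ℝ by L(x,u) = ½‖u − v(x)‖² (Euclidean norm). Then a C² curve x : I → ℝ^N satisfies the Euler–Lagrange equations of L, i.e. d/dt[∇_u L(x(t), ẋ(t))] = ∇_x L(x(t), ẋ(t)) for all t, if and only if ẍ(t) = ∇(½‖v‖²)(x(t)) + (Dv(x(t)) − Dv(x(t))ᵀ) ẋ(t) for all t, where Dv denotes the Jacobian matrix of v. In particular, every solution of ẋ = v(x) satisfies the Euler–Lagrange equations of L. -/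
open Real Set ContinuousLinearMap

noncomputable section

/-- Gradient of a scalar function on `ℝ^n`. -/
def grad (n : ℕ) (f : (Fin n → ℝ) → ℝ) (x : Fin n → ℝ) : Fin n → ℝ :=
  fun k => pd n k f x

lemma lemA (n : ℕ) (c u : Fin n → ℝ) (k : Fin n) :
    pd n k (fun u => (1/2) * ∑ i, (u i - c i) ^ 2) u = u k - c k := by
  have hterm : ∀ i : Fin n, HasFDerivAt (fun u : Fin n → ℝ => (u i - c i) ^ 2)
      ((2 * (u i - c i)) • (proj i : (Fin n → ℝ) →L[ℝ] ℝ)) u := by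
    intro i
    have hp : HasFDerivAt (fun u : Fin n → ℝ => u i - c i)
        (proj i : (Fin n → ℝ) →L[ℝ] ℝ) u :=
      ((proj i : (Fin n → ℝ) →L[ℝ] ℝ).hasFDerivAt).sub_const (c i)
    have := hp.fun_mul hp
    simpa [pow_two, two_mul, add_smul] using this
  have hsum : HasFDerivAt (fun u : Fin n → ℝ => ∑ i, (u i - c i) ^ 2)
      (∑ i, (2 * (u i - c i)) • (proj i : (Fin n → ℝ) →L[ℝ] ℝ)) u :=
    HasFDerivAt.fun_sum fun i _ => hterm i
  have h := hsum.const_mul (1/2 : ℝ)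
  rw [pd, h.fderiv]
  simp [ContinuousLinearMap.sum_apply, Pi.single_apply, Finset.sum_ite_eq', mul_comm]

lemma lemV (n : ℕ) (v : (Fin n → ℝ) → (Fin n → ℝ)) (hv : ContDiff ℝ 1 v)
    (y : Fin n → ℝ) (i k : Fin n) :
    pd n k (fun y => v y i) y = fderiv ℝ v y (Pi.single k 1) i := by
  have hd : HasFDerivAt v (fderiv ℝ v y) y :=
    (hv.differentiable one_ne_zero y).hasFDerivAt
  have h : HasFDerivAt (fun y => v y i)
      ((proj i : (Fin n → ℝ) →L[ℝ] ℝ).comp (fderiv ℝ v y)) y :=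
    (proj i : (Fin n → ℝ) →L[ℝ] ℝ).hasFDerivAt.comp y hd
  rw [pd, h.fderiv]
  rfl

lemma lemB (n : ℕ) (v : (Fin n → ℝ) → (Fin n → ℝ)) (hv : ContDiff ℝ 1 v)
    (u y : Fin n → ℝ) (k : Fin n) :
    pd n k (fun y => (1/2) * ∑ i, (u i - v y i) ^ 2) y
      = -∑ i, (u i - v y i) * (fderiv ℝ v y (Pi.single k 1) i) := by
  have hd : HasFDerivAt v (fderiv ℝ v y) y :=
    (hv.differentiable one_ne_zero y).hasFDerivAt
  have hterm : ∀ i : Fin n, HasFDerivAt (fun y : Fin n → ℝ => (u i - v y i) ^ 2)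
      ((2 * (u i - v y i)) • (-((proj i : (Fin n → ℝ) →L[ℝ] ℝ).comp (fderiv ℝ v y)))) y := by
    intro i
    have hvi : HasFDerivAt (fun y => v y i)
        ((proj i : (Fin n → ℝ) →L[ℝ] ℝ).comp (fderiv ℝ v y)) y :=
      (proj i : (Fin n → ℝ) →L[ℝ] ℝ).hasFDerivAt.comp y hd
    have hp : HasFDerivAt (fun y : Fin n → ℝ => u i - v y i)
        (-((proj i : (Fin n → ℝ) →L[ℝ] ℝ).comp (fderiv ℝ v y))) y := hvi.const_sub (u i)
    have := hp.fun_mul hp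
    simpa [pow_two, two_mul, add_smul] using this
  have hsum : HasFDerivAt (fun y : Fin n → ℝ => ∑ i, (u i - v y i) ^ 2)
      (∑ i, (2 * (u i - v y i)) • (-((proj i : (Fin n → ℝ) →L[ℝ] ℝ).comp (fderiv ℝ v y)))) y :=
    HasFDerivAt.fun_sum fun i _ => hterm i
  have h := hsum.const_mul (1/2 : ℝ)
  rw [pd, h.fderiv]
  simp [ContinuousLinearMap.sum_apply, mul_comm, Finset.mul_sum]
  congr 1
  ext i
  ring

lemma lemC (n : ℕ) (v : (Fin n → ℝ) → (Fin n → ℝ)) (hv : ContDiff ℝ 1 v)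
    (y : Fin n → ℝ) (k : Fin n) :
    pd n k (fun y => (1/2) * ∑ i, (v y i) ^ 2) y
      = ∑ i, v y i * (fderiv ℝ v y (Pi.single k 1) i) := by
  have h : (fun y => (1/2) * ∑ i, (v y i) ^ 2)
      = (fun y => (1/2) * ∑ i, ((0 : Fin n → ℝ) i - v y i) ^ 2) := by
    funext y; simp
  rw [h, lemB n v hv 0 y k]
  simp

/-- The equations produced by the Cartesian approach are the Euler–Lagrange equations of
`L(x,u) = ½‖u − v(x)‖²`: a C² curve satisfies the Euler–Lagrange equations of `L` iff
`ẍ = ∇(½‖v‖²)(x) + (Dv(x) − Dv(x)ᵀ)ẋ`; in particular every solution of `ẋ = v(x)`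
satisfies the Euler–Lagrange equations. -/
theorem lagrangian_of_cartesian_field
    (n : ℕ) (v : (Fin n → ℝ) → (Fin n → ℝ)) (hv : ContDiff ℝ 1 v)
    (L : (Fin n → ℝ) → (Fin n → ℝ) → ℝ)
    (hL : ∀ x u, L x u = (1 / 2) * ∑ i, (u i - v x i) ^ 2)
    -- a C² curve on an open interval, with first derivative x' and second derivative x''
    (t₁ t₂ : ℝ) (x x' x'' : ℝ → (Fin n → ℝ))
    (hx : ∀ t ∈ Ioo t₁ t₂, HasDerivAt x (x' t) t)
    (hx' : ∀ t ∈ Ioo t₁ t₂, HasDerivAt x' (x'' t) t) :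
    -- (a) Euler–Lagrange equations ⟺ the explicit second-order equation
    ((∀ t ∈ Ioo t₁ t₂, ∀ k : Fin n,
        HasDerivAt (fun s => grad n (L (x s)) (x' s) k)
          (grad n (fun y => L y (x' t)) (x t) k) t)
      ↔ (∀ t ∈ Ioo t₁ t₂, ∀ k : Fin n,
          x'' t k = grad n (fun y => (1 / 2) * ∑ i, (v y i) ^ 2) (x t) k
            + ∑ j, (pd n j (fun y => v y k) (x t) - pd n k (fun y => v y j) (x t)) * x' t j))
    ∧
    -- (b) in particular, every solution of ẋ = v(x) satisfies the Euler–Lagrange equations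
    ((∀ t ∈ Ioo t₁ t₂, x' t = v (x t)) →
      ∀ t ∈ Ioo t₁ t₂, ∀ k : Fin n,
        HasDerivAt (fun s => grad n (L (x s)) (x' s) k)
          (grad n (fun y => L y (x' t)) (x t) k) t) := by
  have hfun : ∀ k : Fin n,
      (fun s => grad n (L (x s)) (x' s) k) = (fun s => x' s k - v (x s) k) := by
    intro k; funext s
    have h1 : L (x s) = fun u => (1/2) * ∑ i, (u i - v (x s) i) ^ 2 := funext (hL (x s))
    show pd n k (L (x s)) (x' s) = _
    rw [h1, lemA]
  have hRHS : ∀ t : ℝ, ∀ k : Fin n, grad n (fun y => L y (x' t)) (x t) k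
      = -∑ i, (x' t i - v (x t) i) * (fderiv ℝ v (x t) (Pi.single k 1) i) := by
    intro t k
    have h1 : (fun y => L y (x' t)) = fun y => (1/2) * ∑ i, (x' t i - v y i) ^ 2 := by
      funext y; exact hL y (x' t)
    show pd n k (fun y => L y (x' t)) (x t) = _
    rw [h1, lemB n v hv]
  have hder : ∀ t ∈ Ioo t₁ t₂, ∀ k : Fin n,
      HasDerivAt (fun s => x' s k - v (x s) k)
        (x'' t k - fderiv ℝ v (x t) (x' t) k) t := by
    intro t ht k
    have h1 : HasDerivAt (fun s => x' s k) (x'' t k) t :=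
      (proj k : (Fin n → ℝ) →L[ℝ] ℝ).hasFDerivAt.comp_hasDerivAt t (hx' t ht)
    have hd : HasFDerivAt v (fderiv ℝ v (x t)) (x t) :=
      (hv.differentiable one_ne_zero (x t)).hasFDerivAt
    have h2 : HasDerivAt (fun s => v (x s) k) (fderiv ℝ v (x t) (x' t) k) t :=
      (proj k : (Fin n → ℝ) →L[ℝ] ℝ).hasFDerivAt.comp_hasDerivAt t
        (hd.comp_hasDerivAt t (hx t ht))
    exact h1.sub h2
  have hexp : ∀ t : ℝ, ∀ k : Fin n, fderiv ℝ v (x t) (x' t) k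
      = ∑ j, x' t j * fderiv ℝ v (x t) (Pi.single j 1) k := by
    intro t k
    have hdecomp : x' t = ∑ j, x' t j • (Pi.single j 1 : Fin n → ℝ) := by
      funext m
      simp [Finset.sum_apply, Pi.single_apply]
    conv_lhs => rw [hdecomp]
    rw [map_sum]
    simp [Finset.sum_apply]
  have key : ∀ t ∈ Ioo t₁ t₂, ∀ k : Fin n,
      (HasDerivAt (fun s => grad n (L (x s)) (x' s) k)
          (grad n (fun y => L y (x' t)) (x t) k) t
        ↔ x'' t k = grad n (fun y => (1 / 2) * ∑ i, (v y i) ^ 2) (x t) k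
            + ∑ j, (pd n j (fun y => v y k) (x t) - pd n k (fun y => v y j) (x t)) * x' t j) := by
    intro t ht k
    rw [hfun k, hRHS t k]
    have hg : grad n (fun y => (1 / 2) * ∑ i, (v y i) ^ 2) (x t) k
        = ∑ i, v (x t) i * (fderiv ℝ v (x t) (Pi.single k 1) i) := lemC n v hv (x t) k
    have e1 : ∑ i, (x' t i - v (x t) i) * (fderiv ℝ v (x t) (Pi.single k 1) i)
        = (∑ i, x' t i * fderiv ℝ v (x t) (Pi.single k 1) i)
          - ∑ i, v (x t) i * fderiv ℝ v (x t) (Pi.single k 1) i := by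
      simp [sub_mul, Finset.sum_sub_distrib]
    have e2 : ∑ j, (pd n j (fun y => v y k) (x t) - pd n k (fun y => v y j) (x t)) * x' t j
        = (∑ j, x' t j * fderiv ℝ v (x t) (Pi.single j 1) k)
          - ∑ j, x' t j * fderiv ℝ v (x t) (Pi.single k 1) j := by
      simp only [lemV n v hv, sub_mul, Finset.sum_sub_distrib]
      congr 1 <;> exact Finset.sum_congr rfl fun j _ => mul_comm _ _
    constructor
    · intro h
      have huniq := h.unique (hder t ht k)
      rw [hexp t k] at huniq
      rw [e1] at huniq
      rw [hg, e2]
      linarith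
    · intro h
      rw [hg, e2] at h
      have hval : -∑ i, (x' t i - v (x t) i) * (fderiv ℝ v (x t) (Pi.single k 1) i)
          = x'' t k - fderiv ℝ v (x t) (x' t) k := by
        rw [hexp t k, e1]
        linarith
      rw [hval]
      exact hder t ht k
  constructor
  · constructor
    · intro H t ht k; exact (key t ht k).mp (H t ht k)
    · intro H t ht k; exact (key t ht k).mpr (H t ht k)
  · intro hsol t ht k
    rw [hfun k, hRHS t k]
    have hzero : (fun s => x' s k - v (x s) k) =ᶠ[nhds t] fun _ => (0:ℝ) :=
      Filter.eventuallyEq_of_mem (Ioo_mem_nhds ht.1 ht.2)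
        (fun s hs => by rw [hsol s hs, sub_self])
    have h0 : HasDerivAt (fun s => x' s k - v (x s) k) 0 t :=
      (hasDerivAt_const t (0:ℝ)).congr_of_eventuallyEq hzero
    have : -∑ i, (x' t i - v (x t) i) * (fderiv ℝ v (x t) (Pi.single k 1) i) = 0 := by
      simp [hsol t ht]
    rw [this]
    exact h0
end
end

section
/- Let m, I_C > 0 and ε ∈ ℝ; set J = I_C + ε² m and q = √(m/J). Let x, y, z : I → ℝ be C² functions on an open interval I and μ : I → ℝ a continuous function such that on I: I_C ẍ = ε μ, m ÿ = μ sin x, m z̈ = −μ cos x, together with the nonholonomic constraint ε ẋ + (sin x) ẏ − (cos x) ż = 0. Then there exist real constants C and C₁ such that, setting θ(t) = q ε x(t) + C₁, for all t ∈ I: ẋ(t) = q C cos θ(t), ẏ(t) = C( sin θ(t) cos x(t) − q ε cos θ(t) sin x(t) ), ż(t) = C( sin θ(t) sin x(t) + q ε cos θ(t) cos x(t) ). In other words, every inertial trajectory of the Chapliguin–Carathéodory sleigh is a trajectory of this first-order (Cartesian) system. -/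
open Real Set

noncomputable section

/-- Every inertial trajectory of the Chapliguin–Carathéodory sleigh is a trajectory of
the first-order (Cartesian) system. -/
theorem sleigh_inertial_trajectories
    (m IC ε : ℝ) (hm : 0 < m) (hIC : 0 < IC)
    (J q : ℝ) (hJ : J = IC + ε ^ 2 * m) (hq : q = Real.sqrt (m / J))
    (t₁ t₂ : ℝ)
    (x x' x'' y y' y'' z z' z'' μ : ℝ → ℝ)
    (hμ : ContinuousOn μ (Ioo t₁ t₂))
    (hx : ∀ t ∈ Ioo t₁ t₂, HasDerivAt x (x' t) t)
    (hx' : ∀ t ∈ Ioo t₁ t₂, HasDerivAt x' (x'' t) t)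
    (hy : ∀ t ∈ Ioo t₁ t₂, HasDerivAt y (y' t) t)
    (hy' : ∀ t ∈ Ioo t₁ t₂, HasDerivAt y' (y'' t) t)
    (hz : ∀ t ∈ Ioo t₁ t₂, HasDerivAt z (z' t) t)
    (hz' : ∀ t ∈ Ioo t₁ t₂, HasDerivAt z' (z'' t) t)
    -- equations of motion from the d'Alembert–Lagrange principle
    (e₁ : ∀ t ∈ Ioo t₁ t₂, IC * x'' t = ε * μ t)
    (e₂ : ∀ t ∈ Ioo t₁ t₂, m * y'' t = μ t * Real.sin (x t))
    (e₃ : ∀ t ∈ Ioo t₁ t₂, m * z'' t = -(μ t * Real.cos (x t)))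
    -- nonholonomic constraint
    (econ : ∀ t ∈ Ioo t₁ t₂,
      ε * x' t + Real.sin (x t) * y' t - Real.cos (x t) * z' t = 0) :
    ∃ C C₁ : ℝ, ∀ t ∈ Ioo t₁ t₂,
      x' t = q * C * Real.cos (q * ε * x t + C₁) ∧
      y' t = C * (Real.sin (q * ε * x t + C₁) * Real.cos (x t)
        - q * ε * Real.cos (q * ε * x t + C₁) * Real.sin (x t)) ∧
      z' t = C * (Real.sin (q * ε * x t + C₁) * Real.sin (x t)
        + q * ε * Real.cos (q * ε * x t + C₁) * Real.cos (x t)) := by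
  -- handle empty interval
  by_cases hne : (Ioo t₁ t₂).Nonempty
  swap
  · refine ⟨0, 0, fun t ht => absurd ⟨t, ht⟩ hne⟩
  obtain ⟨t₀, ht₀⟩ := hne
  -- basic positivity
  have hJ0 : 0 < J := by rw [hJ]; positivity
  have hq0 : 0 < q := by rw [hq]; exact Real.sqrt_pos.mpr (by positivity)
  have hq2 : q ^ 2 * J = m := by
    have : q ^ 2 = m / J := by
      rw [hq, sq_sqrt (le_of_lt (by positivity))]
    rw [this]; field_simp
  -- auxiliary functions
  set v : ℝ → ℝ := fun t => y' t * Real.cos (x t) + z' t * Real.sin (x t) with hv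
  set φ : ℝ → ℝ := fun t => q * ε * x t with hφ
  set A : ℝ → ℝ := fun t => x' t * Real.cos (φ t) + q * v t * Real.sin (φ t) with hA
  set B : ℝ → ℝ := fun t => -(x' t) * Real.sin (φ t) + q * v t * Real.cos (φ t) with hB
  -- pythagorean identity helper
  have pyth : ∀ s : ℝ, Real.sin s ^ 2 + Real.cos s ^ 2 = 1 := fun s => Real.sin_sq_add_cos_sq s
  -- component decomposition of velocities
  have hyz : ∀ t ∈ Ioo t₁ t₂,
      y' t = v t * Real.cos (x t) - ε * x' t * Real.sin (x t) ∧
      z' t = v t * Real.sin (x t) + ε * x' t * Real.cos (x t) := by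
    intro t ht
    have hc := econ t ht
    have hp := pyth (x t)
    simp only [hv]
    constructor
    · linear_combination (-(y' t)) * hp + Real.sin (x t) * hc
    · linear_combination (-(z' t)) * hp - Real.cos (x t) * hc
  -- derivative of v
  have hvd : ∀ t ∈ Ioo t₁ t₂, HasDerivAt v (ε * x' t ^ 2) t := by
    intro t ht
    have h1 : HasDerivAt (fun s => y' s * Real.cos (x s) + z' s * Real.sin (x s))
        (y'' t * Real.cos (x t) + y' t * (-Real.sin (x t) * x' t)
          + (z'' t * Real.sin (x t) + z' t * (Real.cos (x t) * x' t))) t := by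
      exact ((hy' t ht).mul (((Real.hasDerivAt_cos (x t)).comp t (hx t ht)))).add
        ((hz' t ht).mul (((Real.hasDerivAt_sin (x t)).comp t (hx t ht))))
    convert h1 using 1
    have h2 := e₂ t ht
    have h3 := e₃ t ht
    have hc := econ t ht
    refine mul_left_cancel₀ hm.ne' ?_
    linear_combination (-Real.cos (x t)) * h2 + (-Real.sin (x t)) * h3 + (m * x' t) * hc
  -- x'' from the differentiated constraint
  have hxdd : ∀ t ∈ Ioo t₁ t₂, J * x'' t = -(ε * m) * v t * x' t := by
    intro t ht
    -- the constraint function has derivative 0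
    have hg : HasDerivAt (fun s => ε * x' s + Real.sin (x s) * y' s - Real.cos (x s) * z' s)
        (ε * x'' t + (Real.cos (x t) * x' t * y' t + Real.sin (x t) * y'' t)
          - (-Real.sin (x t) * x' t * z' t + Real.cos (x t) * z'' t)) t := by
      have := (((hx' t ht).const_mul ε).add
        ((((Real.hasDerivAt_sin (x t)).comp t (hx t ht))).mul (hy' t ht))).sub
        ((((Real.hasDerivAt_cos (x t)).comp t (hx t ht))).mul (hz' t ht))
      exact this
    have hzero : HasDerivAt (fun s => ε * x' s + Real.sin (x s) * y' s - Real.cos (x s) * z' s)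
        0 t := by
      have heq : (fun s => ε * x' s + Real.sin (x s) * y' s - Real.cos (x s) * z' s)
          =ᶠ[nhds t] (fun _ => (0:ℝ)) := by
        filter_upwards [isOpen_Ioo.mem_nhds ht] with s hs using econ s hs
      exact (heq.hasDerivAt_iff.mpr (hasDerivAt_const t 0))
    have hd0 := hg.unique hzero
    have h1 := e₁ t ht
    have h2 := e₂ t ht
    have h3 := e₃ t ht
    have hp := pyth (x t)
    rw [hJ]
    simp only [hv]
    linear_combination (m * ε) * hd0 + (-(ε * Real.sin (x t))) * h2
      + (ε * Real.cos (x t)) * h3 + (-(ε * μ t)) * hp + h1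
  -- A and B have derivative zero
  have hAd : ∀ t ∈ Ioo t₁ t₂, HasDerivAt A 0 t := by
    intro t ht
    have hφd : HasDerivAt φ (q * ε * x' t) t := (hx t ht).const_mul (q * ε)
    have h1 : HasDerivAt A
        (x'' t * Real.cos (φ t) + x' t * (-Real.sin (φ t) * (q * ε * x' t))
          + (q * (ε * x' t ^ 2) * Real.sin (φ t)
            + q * v t * (Real.cos (φ t) * (q * ε * x' t)))) t := by
      exact ((hx' t ht).mul ((Real.hasDerivAt_cos (φ t)).comp t hφd)).add
        ((((hvd t ht).const_mul q)).mul ((Real.hasDerivAt_sin (φ t)).comp t hφd))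
    convert h1 using 1
    have hx2 := hxdd t ht
    refine mul_left_cancel₀ hJ0.ne' ?_
    linear_combination (-(Real.cos (φ t))) * hx2
      + (-(Real.cos (φ t) * ε * v t * x' t)) * hq2
  have hBd : ∀ t ∈ Ioo t₁ t₂, HasDerivAt B 0 t := by
    intro t ht
    have hφd : HasDerivAt φ (q * ε * x' t) t := (hx t ht).const_mul (q * ε)
    have h1 : HasDerivAt B
        (-(x'' t) * Real.sin (φ t) + -(x' t) * (Real.cos (φ t) * (q * ε * x' t))
          + (q * (ε * x' t ^ 2) * Real.cos (φ t)
            + q * v t * (-Real.sin (φ t) * (q * ε * x' t)))) t := by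
      exact (((hx' t ht).neg).mul ((Real.hasDerivAt_sin (φ t)).comp t hφd)).add
        ((((hvd t ht).const_mul q)).mul ((Real.hasDerivAt_cos (φ t)).comp t hφd))
    convert h1 using 1
    have hx2 := hxdd t ht
    refine mul_left_cancel₀ hJ0.ne' ?_
    linear_combination (Real.sin (φ t)) * hx2
      + (Real.sin (φ t) * ε * v t * x' t) * hq2
  -- A and B are constant on the interval
  have hconstA : ∀ t ∈ Ioo t₁ t₂, A t = A t₀ := by
    intro t ht
    refine (convex_Ioo t₁ t₂).is_const_of_fderivWithin_eq_zero
      (fun s hs => ((hAd s hs).differentiableAt.differentiableWithinAt)) ?_ ht ht₀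
    intro s hs
    rw [fderivWithin_of_isOpen isOpen_Ioo hs, (hAd s hs).hasFDerivAt.fderiv]
    ext u
    simp
  have hconstB : ∀ t ∈ Ioo t₁ t₂, B t = B t₀ := by
    intro t ht
    refine (convex_Ioo t₁ t₂).is_const_of_fderivWithin_eq_zero
      (fun s hs => ((hBd s hs).differentiableAt.differentiableWithinAt)) ?_ ht ht₀
    intro s hs
    rw [fderivWithin_of_isOpen isOpen_Ioo hs, (hBd s hs).hasFDerivAt.fderiv]
    ext u
    simp
  -- polar decomposition of (a, b)
  set a := A t₀ with ha
  set b := B t₀ with hb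
  set w : ℂ := ⟨a, b⟩ with hw
  set r := ‖w‖ with hr
  set C₁ := Complex.arg w with hC₁
  have hra : r * Real.cos C₁ = a := Complex.norm_mul_cos_arg w
  have hrb : r * Real.sin C₁ = b := Complex.norm_mul_sin_arg w
  refine ⟨r / q, C₁, fun t ht => ?_⟩
  have hAt := hconstA t ht
  have hBt := hconstB t ht
  simp only [hA, hB] at hAt hBt
  have hp := pyth (φ t)
  -- solve for x' and q v
  have hx'eq : x' t = a * Real.cos (φ t) - b * Real.sin (φ t) := by
    linear_combination Real.cos (φ t) * hAt - Real.sin (φ t) * hBt - x' t * hp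
  have hveq : q * v t = a * Real.sin (φ t) + b * Real.cos (φ t) := by
    linear_combination Real.sin (φ t) * hAt + Real.cos (φ t) * hBt - q * v t * hp
  have hqne : q ≠ 0 := hq0.ne'
  have hθ : q * ε * x t + C₁ = φ t + C₁ := by simp [hφ]
  have hcosθ : Real.cos (q * ε * x t + C₁) = Real.cos (φ t) * Real.cos C₁ - Real.sin (φ t) * Real.sin C₁ := by
    rw [hθ, Real.cos_add]
  have hsinθ : Real.sin (q * ε * x t + C₁) = Real.sin (φ t) * Real.cos C₁ + Real.cos (φ t) * Real.sin C₁ := by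
    rw [hθ, Real.sin_add]
  have hx'final : x' t = q * (r / q) * Real.cos (q * ε * x t + C₁) := by
    rw [hcosθ]
    field_simp
    rw [hx'eq, ← hra, ← hrb]; ring
  have hvfinal : v t = (r / q) * Real.sin (q * ε * x t + C₁) := by
    have : q * v t = q * ((r / q) * Real.sin (q * ε * x t + C₁)) := by
      rw [hsinθ, hveq, ← hra, ← hrb]
      field_simp
    exact mul_left_cancel₀ hqne this
  obtain ⟨hy'eq, hz'eq⟩ := hyz t ht
  refine ⟨hx'final, ?_, ?_⟩
  · rw [hy'eq, hvfinal, hx'final]; ring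
  · rw [hz'eq, hvfinal, hx'final]; ring

end
end

section
/- Let g ∈ ℝ and C₀ ∈ ℝ with C₀ ≠ 0. Let x, y, z : I → ℝ be C² functions on an open interval I and μ : I → ℝ a continuous function such that on I: ẍ = 0, ÿ = g + μ sin x, z̈ = −μ cos x, together with the constraint (sin x) ẏ − (cos x) ż = 0, and suppose ẋ(t₀) = C₀ for some t₀ ∈ I. Then ẋ(t) = C₀ for all t ∈ I, and there exists a real constant C₁ such that for all t ∈ I: ẏ(t) = ( g sin x(t)/C₀ + C₁ ) cos x(t) and ż(t) = ( g sin x(t)/C₀ + C₁ ) sin x(t). Thus all trajectories of Chapliguin's skate with ẋ(t₀) = C₀ ≠ 0 in the uniform force field are trajectories of this first-order (Cartesian) system. -/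
open Real Set

noncomputable section

lemma const_of_hasDerivAt_zero {a b : ℝ} {f : ℝ → ℝ}
    (hf : ∀ t ∈ Ioo a b, HasDerivAt f 0 t) {s t : ℝ}
    (hs : s ∈ Ioo a b) (ht : t ∈ Ioo a b) : f s = f t := by
  apply (convex_Ioo a b).is_const_of_fderivWithin_eq_zero
    (𝕜 := ℝ) (fun u hu => (hf u hu).differentiableAt.differentiableWithinAt) _ hs ht
  intro u hu
  rw [fderivWithin_of_isOpen isOpen_Ioo hu, (hf u hu).hasFDerivAt.fderiv]
  ext v
  simp

/-- All trajectories of Chapliguin's skate with `ẋ(t₀) = C₀ ≠ 0` in the uniform force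
field are trajectories of the first-order (Cartesian) system. -/
theorem skate_trajectories
    (g C₀ : ℝ) (hC₀ : C₀ ≠ 0)
    (t₁ t₂ : ℝ)
    (x x' x'' y y' y'' z z' z'' μ : ℝ → ℝ)
    (hμ : ContinuousOn μ (Ioo t₁ t₂))
    (hx : ∀ t ∈ Ioo t₁ t₂, HasDerivAt x (x' t) t)
    (hx' : ∀ t ∈ Ioo t₁ t₂, HasDerivAt x' (x'' t) t)
    (hy : ∀ t ∈ Ioo t₁ t₂, HasDerivAt y (y' t) t)
    (hy' : ∀ t ∈ Ioo t₁ t₂, HasDerivAt y' (y'' t) t)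
    (hz : ∀ t ∈ Ioo t₁ t₂, HasDerivAt z (z' t) t)
    (hz' : ∀ t ∈ Ioo t₁ t₂, HasDerivAt z' (z'' t) t)
    -- equations of motion
    (e₁ : ∀ t ∈ Ioo t₁ t₂, x'' t = 0)
    (e₂ : ∀ t ∈ Ioo t₁ t₂, y'' t = g + μ t * Real.sin (x t))
    (e₃ : ∀ t ∈ Ioo t₁ t₂, z'' t = -(μ t * Real.cos (x t)))
    -- constraint
    (econ : ∀ t ∈ Ioo t₁ t₂, Real.sin (x t) * y' t - Real.cos (x t) * z' t = 0)
    (t₀ : ℝ) (ht₀ : t₀ ∈ Ioo t₁ t₂) (hinit : x' t₀ = C₀) :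
    (∀ t ∈ Ioo t₁ t₂, x' t = C₀) ∧
    ∃ C₁ : ℝ, ∀ t ∈ Ioo t₁ t₂,
      y' t = (g * Real.sin (x t) / C₀ + C₁) * Real.cos (x t) ∧
      z' t = (g * Real.sin (x t) / C₀ + C₁) * Real.sin (x t) := by
  -- x' is constant
  have hxc : ∀ t ∈ Ioo t₁ t₂, x' t = C₀ := by
    intro t ht
    rw [← hinit]
    exact const_of_hasDerivAt_zero
      (fun u hu => (e₁ u hu) ▸ hx' u hu) ht ht₀
  refine ⟨hxc, ?_⟩
  -- the auxiliary function w = cos x * y' + sin x * z' - g sin x / C₀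
  set w : ℝ → ℝ := fun t =>
    Real.cos (x t) * y' t + Real.sin (x t) * z' t - g * Real.sin (x t) / C₀ with hw
  have hwderiv : ∀ t ∈ Ioo t₁ t₂, HasDerivAt w 0 t := by
    intro t ht
    have hcos : HasDerivAt (fun s => Real.cos (x s)) (-Real.sin (x t) * C₀) t := by
      simpa [hxc t ht, Function.comp_def] using (Real.hasDerivAt_cos (x t)).comp t (hx t ht)
    have hsin : HasDerivAt (fun s => Real.sin (x s)) (Real.cos (x t) * C₀) t := by
      simpa [hxc t ht, Function.comp_def] using (Real.hasDerivAt_sin (x t)).comp t (hx t ht)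
    have h : HasDerivAt w
        ((-Real.sin (x t) * C₀) * y' t + Real.cos (x t) * y'' t
          + ((Real.cos (x t) * C₀) * z' t + Real.sin (x t) * z'' t)
          - g * (Real.cos (x t) * C₀) / C₀) t := by
      exact ((hcos.mul (hy' t ht)).add (hsin.mul (hz' t ht))).sub
        ((hsin.const_mul g).div_const C₀)
    have key : (-Real.sin (x t) * C₀) * y' t + Real.cos (x t) * y'' t
          + ((Real.cos (x t) * C₀) * z' t + Real.sin (x t) * z'' t)
          - g * (Real.cos (x t) * C₀) / C₀ = 0 := by
      have hc := econ t ht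
      rw [e₂ t ht, e₃ t ht]
      have hdiv : g * (Real.cos (x t) * C₀) / C₀ = g * Real.cos (x t) := by
        field_simp
      rw [hdiv]
      ring_nf
      linear_combination (-C₀) * hc
    rwa [key] at h
  set C₁ : ℝ := w t₀ with hC₁
  refine ⟨C₁, fun t ht => ?_⟩
  have hwt : w t = C₁ := const_of_hasDerivAt_zero hwderiv ht ht₀
  have hc := econ t ht
  have hpyth := Real.sin_sq_add_cos_sq (x t)
  have hwdef : Real.cos (x t) * y' t + Real.sin (x t) * z' t - g * Real.sin (x t) / C₀ = C₁ :=
    hwt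
  constructor
  · linear_combination Real.cos (x t) * hwdef + Real.sin (x t) * hc - y' t * hpyth
  · linear_combination Real.sin (x t) * hwdef - Real.cos (x t) * hc - z' t * hpyth
end
end

section
/- Let N ≥ 2, let ν, S : ℝ^N → ℝ be C² functions and f₁, …, f_{N−1} : ℝ^N → ℝ be C¹ functions, and suppose there exists a C¹ function h : ℝ^{N−1} → ℝ such that, as an identity between vector fields on ℝ^N, ⟨∇(ν²), ∇S⟩ ∇S − ‖∇S‖² ∇(ν²) = −2 ∇( h(f₁, …, f_{N−1}) ). Then the force field generating the flow ẋ = ν(x) ∇S(x) is potential: every solution x : I → ℝ^N of ẋ = ν(x) ∇S(x) satisfies ẍ(t) = ∇U(x(t)) for all t, where U = ½ ν² ‖∇S‖² − h(f₁, …, f_{N−1}). -/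
open Real Set

noncomputable section

/-- Euclidean inner product on `ℝ^n`. -/
def dot (n : ℕ) (a b : Fin n → ℝ) : ℝ := ∑ i, a i * b i

/-- Squared Euclidean norm on `ℝ^n`. -/
def nsq (n : ℕ) (a : Fin n → ℝ) : ℝ := ∑ i, a i ^ 2

lemma clm_eq_sum {n : ℕ} (L : (Fin n → ℝ) →L[ℝ] ℝ) (u : Fin n → ℝ) :
    L u = ∑ i, u i * L (Pi.single i 1) := by
  have hu : u = ∑ i, u i • (Pi.single i 1 : Fin n → ℝ) := by
    funext j
    simp [Pi.single_apply, Finset.sum_apply, Finset.sum_ite_eq']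
  conv_lhs => rw [hu]
  rw [map_sum]
  simp [smul_eq_mul]

lemma sq_fun_eq {α : Type*} (g : α → ℝ) : (fun z => g z ^ 2) = fun z => g z * g z := by
  funext z; ring

/-- Generalized Joukovski inverse problem: under the compatibility condition
`⟨∇(ν²),∇S⟩∇S − ‖∇S‖²∇(ν²) = −2∇(h(f₁,…,f_{N−1}))`, every solution of
`ẋ = ν(x)∇S(x)` satisfies `ẍ = ∇U(x)` with `U = ½ν²‖∇S‖² − h(f₁,…,f_{N−1})`. -/
theorem joukovski_potential
    (n : ℕ) (hn : 2 ≤ n)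
    (ν S : (Fin n → ℝ) → ℝ) (hν : ContDiff ℝ 2 ν) (hS : ContDiff ℝ 2 S)
    (f : Fin (n - 1) → (Fin n → ℝ) → ℝ) (hf : ∀ j, ContDiff ℝ 1 (f j))
    (h : (Fin (n - 1) → ℝ) → ℝ) (hh : ContDiff ℝ 1 h)
    (hcomp : ∀ x, ∀ k : Fin n,
      dot n (grad n (fun y => ν y ^ 2) x) (grad n S x) * grad n S x k
        - nsq n (grad n S x) * grad n (fun y => ν y ^ 2) x k
        = -2 * pd n k (fun y => h (fun j => f j y)) x)
    (v : (Fin n → ℝ) → (Fin n → ℝ))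
    (hv : ∀ x, v x = fun k => ν x * grad n S x k)
    (U : (Fin n → ℝ) → ℝ)
    (hU : ∀ x, U x = (1 / 2) * ν x ^ 2 * nsq n (grad n S x) - h (fun j => f j x))
    (t₁ t₂ : ℝ) (x : ℝ → (Fin n → ℝ))
    (hx : ∀ t ∈ Ioo t₁ t₂, HasDerivAt x (v (x t)) t) :
    ∀ t ∈ Ioo t₁ t₂, HasDerivAt (fun s => v (x s)) (grad n U (x t)) t := by
  have hUf : U = fun z => (1 / 2) * ν z ^ 2 * nsq n (grad n S z) - h (fun j => f j z) :=
    funext hU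
  subst hUf
  -- basic smoothness facts
  have hν1 : Differentiable ℝ ν := hν.differentiable two_ne_zero
  have hS1 : Differentiable ℝ S := hS.differentiable two_ne_zero
  have hS' : ContDiff ℝ 1 (fderiv ℝ S) := hS.fderiv_right (by norm_num)
  have hS'd : Differentiable ℝ (fderiv ℝ S) := hS'.differentiable one_ne_zero
  have hQd : Differentiable ℝ (fun z => h (fun j => f j z)) :=
    (hh.comp (contDiff_pi.2 hf)).differentiable one_ne_zero
  -- derivative of z ↦ ∂S/∂w (z)
  have hS2 : ∀ (w : Fin n → ℝ) (z : Fin n → ℝ), HasFDerivAt (fun z => fderiv ℝ S z w)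
      ((ContinuousLinearMap.apply ℝ ℝ w).comp (fderiv ℝ (fderiv ℝ S) z)) z :=
    fun w z => (ContinuousLinearMap.apply ℝ ℝ w).hasFDerivAt.comp z (hS'd z).hasFDerivAt
  intro t ht
  rw [hasDerivAt_pi]
  intro k
  set y := x t with hy
  -- symmetry of the second derivative of S
  have hsymm : ∀ i : Fin n, fderiv ℝ (fderiv ℝ S) y (Pi.single i 1) (Pi.single k 1)
      = fderiv ℝ (fderiv ℝ S) y (Pi.single k 1) (Pi.single i 1) := fun i =>
    second_derivative_symmetric (fun z => (hS1 z).hasFDerivAt) (hS'd y).hasFDerivAt _ _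
  -- the k-th component of v ∘ x
  have hveq : (fun s => v (x s) k)
      = fun s => ν (x s) * fderiv ℝ S (x s) (Pi.single k 1) := by
    funext s; rw [hv]; rfl
  have hvk := (hν1 y).hasFDerivAt.mul (hS2 (Pi.single k 1) y)
  have hchain := hvk.comp_hasDerivAt t (hx t ht)
  rw [hveq]
  -- derivative of ν²
  have hν2 : HasFDerivAt (fun z => ν z ^ 2) ((2 * ν y) • fderiv ℝ ν y) y := by
    rw [sq_fun_eq]
    have h2 := (hν1 y).hasFDerivAt.fun_mul (hν1 y).hasFDerivAt
    refine h2.congr_fderiv ?_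
    rw [two_mul, add_smul]
  -- derivative of (∂ᵢS)²
  have hsq : ∀ i : Fin n, HasFDerivAt (fun z => fderiv ℝ S z (Pi.single i 1) ^ 2)
      ((2 * fderiv ℝ S y (Pi.single i 1)) •
        ((ContinuousLinearMap.apply ℝ ℝ (Pi.single i 1)).comp (fderiv ℝ (fderiv ℝ S) y))) y := by
    intro i
    rw [sq_fun_eq]
    have h2 := (hS2 (Pi.single i 1) y).fun_mul (hS2 (Pi.single i 1) y)
    refine h2.congr_fderiv ?_
    rw [two_mul, add_smul]
  have hsum : HasFDerivAt (fun z => ∑ i, fderiv ℝ S z (Pi.single i 1) ^ 2)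
      (∑ i, (2 * fderiv ℝ S y (Pi.single i 1)) •
        ((ContinuousLinearMap.apply ℝ ℝ (Pi.single i 1)).comp (fderiv ℝ (fderiv ℝ S) y))) y :=
    HasFDerivAt.fun_sum fun i _ => hsq i
  have hP := (hν2.const_mul (1/2 : ℝ)).fun_mul hsum
  -- key algebraic identity
  have key : grad n (fun z => 1 / 2 * ν z ^ 2 * nsq n (grad n S z) - h fun j => f j z) y k
      = (ν y • ((ContinuousLinearMap.apply ℝ ℝ (Pi.single k 1)).comp (fderiv ℝ (fderiv ℝ S) y))
          + fderiv ℝ S y (Pi.single k 1) • fderiv ℝ ν y) (v y) := by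
    have hLHS : grad n (fun z => 1 / 2 * ν z ^ 2 * nsq n (grad n S z) - h fun j => f j z) y k
        = fderiv ℝ (fun z => 1/2 * ν z ^ 2 * ∑ i, fderiv ℝ S z (Pi.single i 1) ^ 2) y
            (Pi.single k 1)
          - fderiv ℝ (fun z => h fun j => f j z) y (Pi.single k 1) := by
      show fderiv ℝ (fun z => (1/2 * ν z ^ 2 * ∑ i, fderiv ℝ S z (Pi.single i 1) ^ 2)
          - h (fun j => f j z)) y (Pi.single k 1) = _
      rw [fderiv_fun_sub hP.differentiableAt (hQd y)]
      simp
    rw [hLHS, hP.fderiv]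
    have hcomp' := hcomp y k
    -- expansion of the second-derivative term applied to v y
    have hCu : (fderiv ℝ (fderiv ℝ S) y (fun i => ν y * fderiv ℝ S y (Pi.single i 1)))
          (Pi.single k 1)
        = ∑ i, (ν y * fderiv ℝ S y (Pi.single i 1))
            * fderiv ℝ (fderiv ℝ S) y (Pi.single i 1) (Pi.single k 1) := by
      have := clm_eq_sum
        ((ContinuousLinearMap.apply ℝ ℝ (Pi.single k 1 : Fin n → ℝ)).comp
          (fderiv ℝ (fderiv ℝ S) y))
        (fun i => ν y * fderiv ℝ S y (Pi.single i 1))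
      simpa using this
    have hAu := clm_eq_sum (fderiv ℝ ν y) (fun i => ν y * fderiv ℝ S y (Pi.single i 1))
    simp only [dot, nsq, grad, pd, hν2.fderiv, hv y, ContinuousLinearMap.add_apply,
      ContinuousLinearMap.coe_smul', Pi.smul_apply, smul_eq_mul,
      ContinuousLinearMap.coe_sum', Finset.sum_apply, ContinuousLinearMap.coe_comp',
      Function.comp_apply, ContinuousLinearMap.apply_apply,
      ContinuousLinearMap.smul_apply] at hcomp' hCu hAu ⊢
    rw [hCu, hAu]
    -- canonical sums
    have e1 : ∑ i : Fin n, 2 * fderiv ℝ S y (Pi.single i 1)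
          * fderiv ℝ (fderiv ℝ S) y (Pi.single k 1) (Pi.single i 1)
        = 2 * ∑ i : Fin n, fderiv ℝ S y (Pi.single i 1)
            * fderiv ℝ (fderiv ℝ S) y (Pi.single k 1) (Pi.single i 1) := by
      rw [Finset.mul_sum]; exact Finset.sum_congr rfl fun i _ => by ring
    have e2 : ∑ i : Fin n, (ν y * fderiv ℝ S y (Pi.single i 1))
          * fderiv ℝ (fderiv ℝ S) y (Pi.single i 1) (Pi.single k 1)
        = ν y * ∑ i : Fin n, fderiv ℝ S y (Pi.single i 1)
            * fderiv ℝ (fderiv ℝ S) y (Pi.single k 1) (Pi.single i 1) := by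
      rw [Finset.mul_sum]; exact Finset.sum_congr rfl fun i _ => by rw [hsymm i]; ring
    have e3 : ∑ i : Fin n, (ν y * fderiv ℝ S y (Pi.single i 1)) * fderiv ℝ ν y (Pi.single i 1)
        = ν y * ∑ i : Fin n, fderiv ℝ ν y (Pi.single i 1) * fderiv ℝ S y (Pi.single i 1) := by
      rw [Finset.mul_sum]; exact Finset.sum_congr rfl fun i _ => by ring
    have e4 : ∑ i : Fin n, 2 * ν y * fderiv ℝ ν y (Pi.single i 1) * fderiv ℝ S y (Pi.single i 1)
        = 2 * ν y * ∑ i : Fin n, fderiv ℝ ν y (Pi.single i 1) * fderiv ℝ S y (Pi.single i 1) := by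
      rw [Finset.mul_sum]; exact Finset.sum_congr rfl fun i _ => by ring
    rw [e1, e2, e3]
    rw [e4] at hcomp'
    linear_combination (-1/2 : ℝ) * hcomp'
  rw [key]
  exact hchain
end
end

section
/- Let N ≥ 1 and let ν : ℝ^N → ℝ be C¹ and S : ℝ^N → ℝ be C². Then every solution x : I → ℝ^N of ẋ = ν(x) ∇S(x) satisfies, for all t ∈ I, ẍ(t) = ∇( ½ ν² ‖∇S‖² )(x(t)) + ⟨ ∇(ν²/2)(x(t)), ∇S(x(t)) ⟩ ∇S(x(t)) − ‖∇S(x(t))‖² ∇(ν²/2)(x(t)). -/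
open Real Set

noncomputable section

lemma clm_apply_sum {n : ℕ} {M : Type*} [NormedAddCommGroup M] [NormedSpace ℝ M]
    (L : (Fin n → ℝ) →L[ℝ] M) (w : Fin n → ℝ) :
    L w = ∑ i, w i • L (Pi.single i 1) := by
  have h : w = ∑ i, w i • (Pi.single i 1 : Fin n → ℝ) := by
    funext j
    simp [Finset.sum_apply, Pi.single_apply]
  conv_lhs => rw [h]
  simp

/-- The force-field identity of the generalized Joukovski proposition: every solution of
`ẋ = ν(x)∇S(x)` satisfies
`ẍ = ∇(½ν²‖∇S‖²) + ⟨∇(ν²/2),∇S⟩∇S − ‖∇S‖²∇(ν²/2)`. -/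
theorem joukovski_force_identity
    (n : ℕ) (hn : 1 ≤ n)
    (ν S : (Fin n → ℝ) → ℝ) (hν : ContDiff ℝ 1 ν) (hS : ContDiff ℝ 2 S)
    (v : (Fin n → ℝ) → (Fin n → ℝ))
    (hv : ∀ x, v x = fun k => ν x * grad n S x k)
    (t₁ t₂ : ℝ) (x : ℝ → (Fin n → ℝ))
    (hx : ∀ t ∈ Ioo t₁ t₂, HasDerivAt x (v (x t)) t) :
    ∀ t ∈ Ioo t₁ t₂,
      HasDerivAt (fun s => v (x s))
        (fun k => grad n (fun y => (1 / 2) * ν y ^ 2 * nsq n (grad n S y)) (x t) k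
          + dot n (grad n (fun y => ν y ^ 2 / 2) (x t)) (grad n S (x t)) * grad n S (x t) k
          - nsq n (grad n S (x t)) * grad n (fun y => ν y ^ 2 / 2) (x t) k) t := by
  have hνd : ∀ z, HasFDerivAt ν (fderiv ℝ ν z) z :=
    fun z => (hν.differentiable one_ne_zero z).hasFDerivAt
  have hSd : ∀ z, HasFDerivAt S (fderiv ℝ S z) z :=
    fun z => (hS.differentiable (by norm_num) z).hasFDerivAt
  have hS2c : ContDiff ℝ 1 (fderiv ℝ S) := hS.fderiv_right (by norm_num)
  have hS2 : ∀ z, HasFDerivAt (fderiv ℝ S) (fderiv ℝ (fderiv ℝ S) z) z :=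
    fun z => (hS2c.differentiable one_ne_zero z).hasFDerivAt
  intro t ht
  set y := x t with hy
  set e : Fin n → (Fin n → ℝ) := fun i => Pi.single i 1 with he
  set F2 := fderiv ℝ (fderiv ℝ S) y with hF2
  set Dν := fderiv ℝ ν y with hDν
  have hsymm : ∀ u w, F2 u w = F2 w u := fun u w =>
    second_derivative_symmetric hSd (hS2 y) u w
  have HpdS : ∀ z (k : Fin n),
      HasFDerivAt (pd n k S) ((fderiv ℝ (fderiv ℝ S) z).flip (e k)) z := by
    intro z k
    have h := (hS2 z).clm_apply (hasFDerivAt_const (e k) z)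
    simp at h
    exact h
  -- abbreviations for the values
  set ν0 := ν y with hν0
  set a : Fin n → ℝ := fun i => Dν (e i) with ha
  set g : Fin n → ℝ := fun i => fderiv ℝ S y (e i) with hg
  set H : Fin n → Fin n → ℝ := fun i k => F2 (e i) (e k) with hH
  -- derivative of ν^2
  have hpow : ∀ z, HasFDerivAt (fun z => ν z ^ 2) (ν z • fderiv ℝ ν z + ν z • fderiv ℝ ν z) z := by
    intro z
    have := (hνd z).mul (hνd z)
    simp only [← pow_two] at this
    exact this
  -- derivative of the nsq∘grad term
  have hnsq : HasFDerivAt (fun z => ∑ i, pd n i S z ^ 2)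
      (∑ i, (pd n i S y • F2.flip (e i) + pd n i S y • F2.flip (e i))) y := by
    apply HasFDerivAt.fun_sum
    intro i _
    have := (HpdS y i).mul (HpdS y i)
    simp only [← pow_two] at this
    exact this
  -- derivative of (1/2)ν²
  have hc : HasFDerivAt (fun z => (1/2 : ℝ) * ν z ^ 2)
      ((1/2 : ℝ) • (ν0 • Dν + ν0 • Dν)) y := (hpow y).const_mul (1/2)
  have h1 := hc.mul hnsq
  -- value of grad of the first function
  have hfun1 : (fun z => 1 / 2 * ν z ^ 2 * nsq n (grad n S z))
      = (fun z => (1/2 : ℝ) * ν z ^ 2 * ∑ i, pd n i S z ^ 2) := by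
    funext z; simp [nsq, grad]
  have hpd1 : ∀ k, pd n k (fun z => 1 / 2 * ν z ^ 2 * nsq n (grad n S z)) y
      = ν0 * a k * (∑ i, g i ^ 2) + ν0 ^ 2 * (∑ i, g i * H k i) := by
    intro k
    have hfd : fderiv ℝ (fun z => 1 / 2 * ν z ^ 2 * nsq n (grad n S z)) y
        = ((1/2 : ℝ) * ν y ^ 2) • (∑ i, (pd n i S y • F2.flip (e i) + pd n i S y • F2.flip (e i)))
          + (∑ i, pd n i S y ^ 2) • ((1/2 : ℝ) • (ν0 • Dν + ν0 • Dν)) := by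
      rw [hfun1]; exact h1.fderiv
    rw [pd, hfd]
    have hpds : ∀ i, pd n i S y = g i := fun i => rfl
    simp only [ContinuousLinearMap.add_apply, ContinuousLinearMap.smul_apply,
      ContinuousLinearMap.sum_apply, ContinuousLinearMap.flip_apply, smul_eq_mul, hpds]
    rw [Finset.mul_sum, Finset.mul_sum]
    rw [show (∑ i, (1/2 * ν y ^2) * (g i * F2 (e k) (e i) + g i * F2 (e k) (e i)))
        = ν0 ^2 * ∑ i, g i * H k i from by
      rw [Finset.mul_sum]; exact Finset.sum_congr rfl fun i _ => by rw [hH]; ring]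
    simp only [← Finset.mul_sum]
    ring
  -- value of grad of ν²/2
  have hfun2 : (fun z => ν z ^ 2 / 2) = (fun z => (1/2 : ℝ) * ν z ^ 2) := by
    funext z; ring
  have hpd2 : ∀ k, pd n k (fun z => ν z ^ 2 / 2) y = ν0 * a k := by
    intro k
    have hfd : fderiv ℝ (fun z => ν z ^ 2 / 2) y = (1/2 : ℝ) • (ν0 • Dν + ν0 • Dν) := by
      rw [hfun2]; exact hc.fderiv
    rw [pd, hfd]
    simp only [ContinuousLinearMap.add_apply, ContinuousLinearMap.smul_apply, smul_eq_mul]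
    ring
  -- left-hand side: derivative of each component of v ∘ x
  have hx' := hx t ht
  have hvy : ∀ i, v y i = ν0 * g i := by
    intro i; rw [hv]; rfl
  have hcompν : HasDerivAt (fun s => ν (x s)) (Dν (v y)) t :=
    (hνd y).comp_hasDerivAt t hx'
  have hcomppd : ∀ k, HasDerivAt (fun s => pd n k S (x s)) (F2 (v y) (e k)) t := by
    intro k
    exact (HpdS y k).comp_hasDerivAt t hx'
  rw [hasDerivAt_pi]
  intro k
  have hk := hcompν.fun_mul (hcomppd k)
  have hfun3 : (fun s => v (x s) k) = (fun s => ν (x s) * pd n k S (x s)) := by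
    funext s; rw [hv]; simp [grad]
  rw [hfun3]

  refine hk.congr_deriv (Eq.symm ?_)
  -- now a pure algebraic identity
  have hDv : Dν (v y) = ∑ i, (ν0 * g i) * a i := by
    rw [clm_apply_sum]
    exact Finset.sum_congr rfl fun i _ => by rw [hvy i, smul_eq_mul, ha]
  have hF2v : F2 (v y) (e k) = ∑ i, (ν0 * g i) * H k i := by
    rw [clm_apply_sum F2 (v y), ContinuousLinearMap.sum_apply]
    refine Finset.sum_congr rfl fun i _ => ?_
    rw [ContinuousLinearMap.smul_apply, smul_eq_mul, hvy i, hsymm (e i) (e k)]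
  have hpds : ∀ i, pd n i S y = g i := fun i => rfl
  simp only [grad, dot, nsq]
  rw [← hfun1, hpd1 k, hDv, hF2v]
  simp only [hpd2, hpds]
  set A := ∑ i, g i * a i with hA
  set B := ∑ i, g i ^ 2 with hB
  set C := ∑ i, g i * H k i with hC
  have e1 : ∑ i, ν0 * g i * a i = ν0 * A := by
    rw [hA, Finset.mul_sum]; exact Finset.sum_congr rfl fun i _ => by ring
  have e2 : ∑ i, ν0 * a i * g i = ν0 * A := by
    rw [hA, Finset.mul_sum]; exact Finset.sum_congr rfl fun i _ => by ring
  have e3 : ∑ i, ν0 * g i * H k i = ν0 * C := by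
    rw [hC, Finset.mul_sum]; exact Finset.sum_congr rfl fun i _ => by ring
  rw [e1, e2, e3]
  change ν0 * a k * B + ν0 ^ 2 * C + ν0 * A * g k - B * (ν0 * a k) = ν0 * A * g k + ν0 * (ν0 * C)
  ring
end
end

section
/- Let b ∈ ℝ with b ≠ 0, let j ∈ ℤ, and let K ∈ ℝ. Let J ⊆ ℝ be an interval with 1 + bτ ≠ 0 for all τ ∈ J, and let H : J → ℝ be differentiable and satisfy on J the first-order linear equation b (1 − τ²) H'(τ) + ( (j+1) b τ + j + 3 ) H(τ) + 2 K (1 + bτ)^j = 0. Define Λ(r, τ) = r^{j+1} H(τ) for r > 0 and τ ∈ J. Then for all r > 0 and τ ∈ J: (1 + bτ) ∂_r Λ(r,τ) + ( b (1 − τ²) / r ) ∂_τ Λ(r,τ) + (2/r) Λ(r,τ) = −2 K r^j (1 + bτ)^j. -/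
open Real Set

noncomputable section

/-- Bertrand's inverse problem, key computation: if `H` satisfies the first-order linear
equation (B4), then `Λ(r,τ) = r^{j+1} H(τ)` satisfies the compatibility condition (B0)
with `h(f) = −K f^{j+1}/(j+1)`. -/
theorem bertrand_compatibility
    (b : ℝ) (hb : b ≠ 0) (j : ℤ) (K : ℝ)
    (J : Set ℝ) (hJ : J.OrdConnected)
    (hJb : ∀ τ ∈ J, 1 + b * τ ≠ 0)
    (H H' : ℝ → ℝ)
    (hH : ∀ τ ∈ J, HasDerivWithinAt H (H' τ) J τ)
    (heq : ∀ τ ∈ J,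
      b * (1 - τ ^ 2) * H' τ + (((j : ℝ) + 1) * b * τ + (j : ℝ) + 3) * H τ
        + 2 * K * (1 + b * τ) ^ j = 0)
    (Λ : ℝ → ℝ → ℝ)
    (hΛ : ∀ r τ, Λ r τ = r ^ (j + 1) * H τ) :
    ∀ r : ℝ, 0 < r → ∀ τ ∈ J,
      ∃ Λr Λτ : ℝ,
        HasDerivAt (fun r' => Λ r' τ) Λr r ∧
        HasDerivWithinAt (fun τ' => Λ r τ') Λτ J τ ∧
        (1 + b * τ) * Λr + (b * (1 - τ ^ 2) / r) * Λτ + (2 / r) * Λ r τ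
          = -2 * K * r ^ j * (1 + b * τ) ^ j := by
  intro r hr τ hτ
  refine ⟨((j : ℝ) + 1) * r ^ j * H τ, r ^ (j + 1) * H' τ, ?_, ?_, ?_⟩
  · have h1 : HasDerivAt (fun r' : ℝ => r' ^ (j + 1)) (((j : ℝ) + 1) * r ^ (j + 1 - 1)) r :=
      hasDerivAt_zpow (j + 1) r (Or.inl hr.ne') |>.congr_deriv (by push_cast; ring_nf)
    have h2 := h1.mul_const (H τ)
    simp only [hΛ]
    exact h2.congr_deriv (by simp only [add_sub_cancel_right])
  · have h2 := ((hH τ hτ).const_mul (r ^ (j + 1)))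
    simp only [hΛ]
    exact h2
  · have hrz : r ≠ 0 := hr.ne'
    have key := heq τ hτ
    have hpow : r ^ (j + 1) = r ^ j * r := by
      rw [zpow_add_one₀ hrz]
    simp only [hΛ, hpow]
    field_simp
    linear_combination key
end
end

section
/- Let b ∈ ℝ with b ≠ 0, let j ∈ ℤ, and set a = (1 + b)/(2b). Let J ⊆ ℝ be an open interval on which z ≠ 0, z ≠ 1 and z ≠ a, and let H : J → ℝ be twice differentiable and satisfy on J the Heun equation H''(z) + [ (1 − a(1+j) − 1/b)/z + (a(1+j) + 1/b − j)/(z − 1) − j/(z − a) ] H'(z) + [ ( (j² − 1) z − j/b − a (j² − 1) ) / ( z (z − 1)(z − a) ) ] H(z) = 0. Then the function F(z) = [ z (z − 1) H'(z) + (1/(2b)) ( (1 + b − 2bz)(j + 1) + 2 ) H(z) ] · (1 + b − 2bz)^{−j} is constant on J. (Note that 1 + b − 2bz = −2b(z − a) ≠ 0 on J.) -/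
open Real Set

noncomputable section

set_option maxHeartbeats 1000000 in
/-- The functions `F_j` are first integrals of the Heun equation (B7) arising in
Bertrand's inverse problem. -/
theorem heun_first_integral
    (b : ℝ) (hb : b ≠ 0) (j : ℤ) (a : ℝ) (ha : a = (1 + b) / (2 * b))
    (lo hi : ℝ)
    (hJ : ∀ z ∈ Ioo lo hi, z ≠ 0 ∧ z ≠ 1 ∧ z ≠ a)
    (H H' H'' : ℝ → ℝ)
    (hH : ∀ z ∈ Ioo lo hi, HasDerivAt H (H' z) z)
    (hH' : ∀ z ∈ Ioo lo hi, HasDerivAt H' (H'' z) z)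
    -- the Heun equation
    (heun : ∀ z ∈ Ioo lo hi,
      H'' z
        + ((1 - a * (1 + (j : ℝ)) - 1 / b) / z
            + (a * (1 + (j : ℝ)) + 1 / b - (j : ℝ)) / (z - 1)
            - (j : ℝ) / (z - a)) * H' z
        + ((((j : ℝ) ^ 2 - 1) * z - (j : ℝ) / b - a * ((j : ℝ) ^ 2 - 1))
            / (z * (z - 1) * (z - a))) * H z = 0)
    (F : ℝ → ℝ)
    (hF : ∀ z, F z = (z * (z - 1) * H' z
        + (1 / (2 * b)) * ((1 + b - 2 * b * z) * ((j : ℝ) + 1) + 2) * H z)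
        * (1 + b - 2 * b * z) ^ (-j)) :
    ∀ z ∈ Ioo lo hi, ∀ w ∈ Ioo lo hi, F z = F w := by
  subst ha
  have hb2 : (2 : ℝ) * b ≠ 0 := mul_ne_zero two_ne_zero hb
  have key : ∀ z ∈ Ioo lo hi, HasDerivAt F 0 z := by
    intro z hz
    obtain ⟨hz0, hz1, hza⟩ := hJ z hz
    have hz1' : z - 1 ≠ 0 := sub_ne_zero.mpr hz1
    have hza' : z - (1 + b) / (2 * b) ≠ 0 := sub_ne_zero.mpr hza
    have hP : (1 + b - 2 * b * z) ≠ 0 := by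
      have : 1 + b - 2 * b * z = -(2 * b) * (z - (1 + b) / (2 * b)) := by
        field_simp; ring
      rw [this]
      exact mul_ne_zero (neg_ne_zero.mpr hb2) hza'
    -- derivative of the linear factor
    have hlin : HasDerivAt (fun y : ℝ => 1 + b - 2 * b * y) (-(2 * b)) z := by
      simpa using ((hasDerivAt_id z).const_mul (2 * b)).const_sub (1 + b)
    -- derivative of the power
    have hpow : HasDerivAt (fun y : ℝ => (1 + b - 2 * b * y) ^ (-j))
        (((-j : ℤ) : ℝ) * (1 + b - 2 * b * z) ^ (-j - 1) * (-(2 * b))) z := by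
      have h := (hasDerivAt_zpow (-j) (1 + b - 2 * b * z) (Or.inl hP)).comp z hlin
      simpa [Function.comp_def] using h
    -- derivative of the bracket G
    have hq : HasDerivAt (fun y : ℝ => y * (y - 1)) (1 * (z - 1) + z * 1) z :=
      (hasDerivAt_id z).mul ((hasDerivAt_id z).sub_const 1)
    have hc : HasDerivAt
        (fun y : ℝ => (1 / (2 * b)) * ((1 + b - 2 * b * y) * ((j : ℝ) + 1) + 2))
        ((1 / (2 * b)) * (-(2 * b) * ((j : ℝ) + 1))) z :=
      ((hlin.mul_const ((j : ℝ) + 1)).add_const 2).const_mul (1 / (2 * b))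
    have hG : HasDerivAt
        (fun y : ℝ => y * (y - 1) * H' y
          + (1 / (2 * b)) * ((1 + b - 2 * b * y) * ((j : ℝ) + 1) + 2) * H y)
        (((1 * (z - 1) + z * 1) * H' z + z * (z - 1) * H'' z)
          + ((1 / (2 * b)) * (-(2 * b) * ((j : ℝ) + 1)) * H z
            + (1 / (2 * b)) * ((1 + b - 2 * b * z) * ((j : ℝ) + 1) + 2) * H' z)) z :=
      (hq.mul (hH' z hz)).add (hc.mul (hH z hz))
    have hFfun : F = fun y : ℝ => (y * (y - 1) * H' y
        + (1 / (2 * b)) * ((1 + b - 2 * b * y) * ((j : ℝ) + 1) + 2) * H y)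
        * (1 + b - 2 * b * y) ^ (-j) := funext hF
    have hFd := hG.mul hpow
    simp only [Pi.mul_def] at hFd
    rw [← hFfun] at hFd
    -- the computed derivative vanishes
    have e := heun z hz
    have hw2 : z * (2 * b) - (1 + b) ≠ 0 := by
      intro h; apply hP; linarith
    have hw3 : b * 2 * z - (1 + b) ≠ 0 := by
      intro h; apply hP; linarith
    field_simp [hz0, hz1', hw2, hb, hw3] at e
    set B2 : ℝ := (((1 * (z - 1) + z * 1) * H' z + z * (z - 1) * H'' z) * (2 * b)
          + (-(2 * b) * ((j : ℝ) + 1)) * H z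
          + ((1 + b - 2 * b * z) * ((j : ℝ) + 1) + 2) * H' z) * (1 + b - 2 * b * z)
        + 2 * b * (j : ℝ) * (2 * b * z * (z - 1) * H' z
          + ((1 + b - 2 * b * z) * ((j : ℝ) + 1) + 2) * H z) with hB2
    have hbig : (4 * b ^ 5 * z * (z - 1) * (z * (2 * b) - (1 + b))) * B2 = 0 := by
      rw [hB2]; linear_combination (-(4 * b ^ 5 * z * (z - 1) * (z * (2 * b) - (1 + b)))) * e
    have nz : (4 * b ^ 5 * z * (z - 1) * (z * (2 * b) - (1 + b))) ≠ 0 :=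
      mul_ne_zero (mul_ne_zero (mul_ne_zero
        (mul_ne_zero four_ne_zero (pow_ne_zero 5 hb)) hz0) hz1') hw2
    have hbr2 : B2 = 0 := by
      rcases mul_eq_zero.mp hbig with h | h
      · exact absurd h nz
      · exact h
    have hbr : (((1 * (z - 1) + z * 1) * H' z + z * (z - 1) * H'' z)
          + ((1 / (2 * b)) * (-(2 * b) * ((j : ℝ) + 1)) * H z
            + (1 / (2 * b)) * ((1 + b - 2 * b * z) * ((j : ℝ) + 1) + 2) * H' z))
          * (1 + b - 2 * b * z)
        + 2 * b * (j : ℝ) * (z * (z - 1) * H' z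
          + (1 / (2 * b)) * ((1 + b - 2 * b * z) * ((j : ℝ) + 1) + 2) * H z) = 0 := by
      have hconn : (((1 * (z - 1) + z * 1) * H' z + z * (z - 1) * H'' z)
          + ((1 / (2 * b)) * (-(2 * b) * ((j : ℝ) + 1)) * H z
            + (1 / (2 * b)) * ((1 + b - 2 * b * z) * ((j : ℝ) + 1) + 2) * H' z))
          * (1 + b - 2 * b * z)
        + 2 * b * (j : ℝ) * (z * (z - 1) * H' z
          + (1 / (2 * b)) * ((1 + b - 2 * b * z) * ((j : ℝ) + 1) + 2) * H z)
          = (1 / (2 * b)) * B2 := by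
        rw [hB2]; field_simp; ring
      rw [hconn, hbr2, mul_zero]
    have hsplit : (1 + b - 2 * b * z) ^ (-j)
        = (1 + b - 2 * b * z) ^ (-j - 1) * (1 + b - 2 * b * z) := by
      rw [← zpow_add_one₀ hP, sub_add_cancel]
    have hzero : (((1 * (z - 1) + z * 1) * H' z + z * (z - 1) * H'' z)
          + ((1 / (2 * b)) * (-(2 * b) * ((j : ℝ) + 1)) * H z
            + (1 / (2 * b)) * ((1 + b - 2 * b * z) * ((j : ℝ) + 1) + 2) * H' z))
          * (1 + b - 2 * b * z) ^ (-j)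
        + (z * (z - 1) * H' z
          + (1 / (2 * b)) * ((1 + b - 2 * b * z) * ((j : ℝ) + 1) + 2) * H z)
          * (((-j : ℤ) : ℝ) * (1 + b - 2 * b * z) ^ (-j - 1) * (-(2 * b))) = 0 := by
      rw [hsplit]
      push_cast
      calc _ = (1 + b - 2 * b * z) ^ (-j - 1)
            * ((((1 * (z - 1) + z * 1) * H' z + z * (z - 1) * H'' z)
              + ((1 / (2 * b)) * (-(2 * b) * ((j : ℝ) + 1)) * H z
                + (1 / (2 * b)) * ((1 + b - 2 * b * z) * ((j : ℝ) + 1) + 2) * H' z))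
              * (1 + b - 2 * b * z)
            + 2 * b * (j : ℝ) * (z * (z - 1) * H' z
              + (1 / (2 * b)) * ((1 + b - 2 * b * z) * ((j : ℝ) + 1) + 2) * H z)) := by
            ring
        _ = 0 := by rw [hbr, mul_zero]
    rw [hzero] at hFd
    exact hFd
  -- constancy on the interval
  have main : ∀ z ∈ Ioo lo hi, ∀ w ∈ Ioo lo hi, z ≤ w → F z = F w := by
    intro z hz w hw hzw
    have hsub : Icc z w ⊆ Ioo lo hi := fun x hx =>
      ⟨lt_of_lt_of_le hz.1 hx.1, lt_of_le_of_lt hx.2 hw.2⟩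
    have hconst := constant_of_has_deriv_right_zero (f := F) (a := z) (b := w)
      (fun x hx => (key x (hsub hx)).continuousAt.continuousWithinAt)
      (fun x hx => ((key x (hsub (Ico_subset_Icc_self hx))).hasDerivWithinAt))
    exact (hconst w (right_mem_Icc.2 hzw)).symm
  intro z hz w hw
  rcases le_total z w with h | h
  · exact main z hz w hw h
  · exact (main w hw z hz h).symm
end
end

section
/- Let N ≥ 2, let f₁, …, f_{N−1} : ℝ^N → ℝ be C² functions, and let v : ℝ^N → ℝ^N be a C¹ vector field such that ⟨∇f_j(x), v(x)⟩ = 0 for every x ∈ ℝ^N and every j = 1, …, N−1, and such that the gradients ∇f₁(x), …, ∇f_{N−1}(x) are linearly independent for every x. Then every solution x : I → ℝ^N of ẋ = v(x) satisfies: (i) each f_j(x(t)) is constant on I, so the trajectory lies on the (N−1)-parametric family of orbits f_j = c_j; and (ii) for every t ∈ I, the vector ẍ(t) − ∇(½‖v‖²)(x(t)) lies in the linear span of ∇f₁(x(t)), …, ∇f_{N−1}(x(t)); i.e. the trajectories are generated by a force field of the form F = ∇(½‖v‖²) + Σ_{j=1}^{N−1} Λ_j ∇f_j for suitable multiplier functions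 Λ_j. -/
open Real Set

noncomputable section

/-! ### Auxiliary lemmas -/

/-- `dot` as a linear map in the first argument. -/
noncomputable def dotL (n : ℕ) (v : Fin n → ℝ) : (Fin n → ℝ) →ₗ[ℝ] ℝ where
  toFun w := dot n w v
  map_add' a b := by simp [dot, add_mul, Finset.sum_add_distrib]
  map_smul' c a := by simp [dot, Finset.mul_sum, mul_assoc]

lemma dot_self_eq_zero' {n : ℕ} {a : Fin n → ℝ} (h : dot n a a = 0) : a = 0 := by
  have : ∀ i ∈ Finset.univ, a i * a i = 0 := by
    intro i _
    have := (Finset.sum_eq_zero_iff_of_nonneg (fun i _ => mul_self_nonneg (a i))).mp h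
    exact this i (Finset.mem_univ i)
  funext i
  exact mul_self_eq_zero.mp (this i (Finset.mem_univ i))

lemma dot_add_left' {n : ℕ} (a b c : Fin n → ℝ) :
    dot n (a + b) c = dot n a c + dot n b c := by
  simp [dot, add_mul, Finset.sum_add_distrib]

lemma dot_smul_left' {n : ℕ} (r : ℝ) (a c : Fin n → ℝ) :
    dot n (r • a) c = r * dot n a c := by
  simp [dot, Finset.mul_sum, mul_assoc]

lemma dot_sum_left' {n : ℕ} {ι : Type*} (s : Finset ι) (a : ι → Fin n → ℝ) (c : Fin n → ℝ) :
    dot n (∑ j ∈ s, a j) c = ∑ j ∈ s, dot n (a j) c := by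
  classical
  induction s using Finset.induction with
  | empty => simp [dot]
  | @insert a s h ih => rw [Finset.sum_insert h, dot_add_left', ih, Finset.sum_insert h]

lemma span_lemma' {n : ℕ} (g : Fin (n-1) → (Fin n → ℝ))
    (hg : LinearIndependent ℝ g) (v : Fin n → ℝ) (hv : v ≠ 0)
    (horth : ∀ j, dot n (g j) v = 0) (d : Fin n → ℝ) (hd : dot n d v = 0) :
    ∃ Λ : Fin (n-1) → ℝ, d = ∑ j, Λ j • g j := by
  have hvs : dot n v v ≠ 0 := fun h => hv (dot_self_eq_zero' h)
  have hnotmem : v ∉ Submodule.span ℝ (range g) := by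
    intro hmem
    have hker : Submodule.span ℝ (range g) ≤ LinearMap.ker (dotL n v) := by
      rw [Submodule.span_le]
      rintro _ ⟨j, rfl⟩
      exact horth j
    exact hvs (hker hmem)
  have hli : LinearIndependent ℝ
      (fun o => Option.casesOn' o v g : Option (Fin (n-1)) → (Fin n → ℝ)) :=
    hg.option hnotmem
  have hcard : Fintype.card (Option (Fin (n-1))) = Module.finrank ℝ (Fin n → ℝ) := by
    have h1 : v ≠ 0 := hv
    have : n ≠ 0 := by
      rintro rfl
      exact h1 (funext fun i => absurd i.2 (by omega))
    simp [Module.finrank_fintype_fun_eq_card]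
    omega
  have hspan := hli.span_eq_top_of_card_eq_finrank hcard
  have hdmem : d ∈ Submodule.span ℝ
      (range (fun o => Option.casesOn' o v g : Option (Fin (n-1)) → (Fin n → ℝ))) := by
    rw [hspan]; trivial
  rw [Finsupp.mem_span_range_iff_exists_finsupp] at hdmem
  obtain ⟨c, hc⟩ := hdmem
  rw [Finsupp.sum_fintype _ _ (by simp)] at hc
  rw [Fintype.sum_option] at hc
  simp only [Option.casesOn'] at hc
  have h0 : c none = 0 := by
    have := hd
    rw [← hc] at this
    have expand : dot n (c none • v + ∑ j, c (some j) • g j) v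
        = c none * dot n v v + ∑ j, c (some j) * dot n (g j) v := by
      rw [dot_add_left', dot_smul_left', dot_sum_left']
      simp [dot_smul_left']
    rw [expand] at this
    simp [horth] at this
    rcases this with h | h
    · exact h
    · exact absurd (dot_self_eq_zero' h) hv
  refine ⟨fun j => c (some j), ?_⟩
  rw [← hc, h0]
  simp

lemma apply_eq_sum' {n : ℕ} {M : Type*} [AddCommGroup M] [Module ℝ M]
    (L : (Fin n → ℝ) →ₗ[ℝ] M) (w : Fin n → ℝ) :
    L w = ∑ k, w k • L (Pi.single k 1) := by
  have hw : w = ∑ k, w k • (Pi.single k 1 : Fin n → ℝ) := by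
    funext i
    simp [Finset.sum_apply, Pi.single_apply]
  conv_lhs => rw [hw]
  rw [map_sum]
  simp

lemma fderiv_apply_eq_dot_grad' {n : ℕ} (f : (Fin n → ℝ) → ℝ) (p w : Fin n → ℝ) :
    fderiv ℝ f p w = dot n (grad n f p) w := by
  rw [show fderiv ℝ f p w = (fderiv ℝ f p : (Fin n → ℝ) →ₗ[ℝ] ℝ) w from rfl,
    apply_eq_sum']
  simp [dot, grad, pd, mul_comm]

lemma grad_half_nsq' {n : ℕ} (v : (Fin n → ℝ) → (Fin n → ℝ)) (hv : ContDiff ℝ 1 v)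
    (p : Fin n → ℝ) (k : Fin n) :
    grad n (fun y => (1 / 2 : ℝ) * nsq n (v y)) p k
      = ∑ i, v p i * fderiv ℝ v p (Pi.single k 1) i := by
  have hvd : HasFDerivAt v (fderiv ℝ v p) p :=
    (hv.differentiable one_ne_zero).differentiableAt.hasFDerivAt
  set A := fderiv ℝ v p
  have hcomp : ∀ i : Fin n, HasFDerivAt (fun y => v y i)
      ((ContinuousLinearMap.proj i).comp A) p := fun i => by
    exact (ContinuousLinearMap.proj i).hasFDerivAt.comp p hvd
  have hsq : ∀ i : Fin n, HasFDerivAt (fun y => v y i * v y i)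
      (v p i • ((ContinuousLinearMap.proj i).comp A)
        + v p i • ((ContinuousLinearMap.proj i).comp A)) p := fun i =>
    (hcomp i).mul (hcomp i)
  have hsum : HasFDerivAt (fun y => ∑ i, v y i * v y i)
      (∑ i, (v p i • ((ContinuousLinearMap.proj i).comp A)
        + v p i • ((ContinuousLinearMap.proj i).comp A))) p :=
    HasFDerivAt.fun_sum (fun i _ => hsq i)
  have hhalf : HasFDerivAt (fun y => (1 / 2 : ℝ) * nsq n (v y))
      ((1 / 2 : ℝ) • ∑ i, (v p i • ((ContinuousLinearMap.proj i).comp A)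
        + v p i • ((ContinuousLinearMap.proj i).comp A))) p := by
    have : (fun y => (1 / 2 : ℝ) * nsq n (v y))
        = fun y => (1 / 2 : ℝ) * ∑ i, v y i * v y i := by
      funext y; simp [nsq, sq]
    rw [this]
    exact hsum.const_mul _
  rw [grad, pd, hhalf.fderiv]
  simp [ContinuousLinearMap.sum_apply, Finset.mul_sum]
  rw [Finset.sum_congr rfl]
  intro i _
  ring

/-- Generalized Dainelli inverse problem: if `v` is annihilated by all `df_j` and the
gradients `∇f_j` are independent, then along solutions of `ẋ = v(x)` each `f_j` is
constant and the acceleration equals `∇(½‖v‖²)` plus a combination of the `∇f_j`. -/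
theorem generalized_dainelli
    (n : ℕ) (hn : 2 ≤ n)
    (f : Fin (n - 1) → (Fin n → ℝ) → ℝ) (hf : ∀ j, ContDiff ℝ 2 (f j))
    (v : (Fin n → ℝ) → (Fin n → ℝ)) (hv : ContDiff ℝ 1 v)
    (horth : ∀ x, ∀ j : Fin (n - 1), dot n (grad n (f j) x) (v x) = 0)
    (hindep : ∀ x, LinearIndependent ℝ (fun j : Fin (n - 1) => grad n (f j) x))
    (t₁ t₂ : ℝ) (x : ℝ → (Fin n → ℝ))
    (hx : ∀ t ∈ Ioo t₁ t₂, HasDerivAt x (v (x t)) t) :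
    -- (i) the trajectory lies on the family of orbits f_j = c_j
    (∀ j : Fin (n - 1), ∀ t ∈ Ioo t₁ t₂, ∀ s ∈ Ioo t₁ t₂, f j (x t) = f j (x s)) ∧
    -- (ii) the force is ∇(½‖v‖²) plus reactions along the gradients ∇f_j
    (∀ t ∈ Ioo t₁ t₂, ∃ Λ : Fin (n - 1) → ℝ,
      HasDerivAt (fun s => v (x s))
        (fun k => grad n (fun y => (1 / 2) * nsq n (v y)) (x t) k
          + ∑ j, Λ j * grad n (f j) (x t) k) t) := by
  constructor
  · -- (i)
    intro j t ht s hs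
    have hderiv : ∀ u ∈ Ioo t₁ t₂,
        HasDerivWithinAt (fun r => f j (x r)) 0 (Ioo t₁ t₂) u := by
      intro u hu
      have h1 : HasFDerivAt (f j) (fderiv ℝ (f j) (x u)) (x u) :=
        ((hf j).differentiable two_ne_zero).differentiableAt.hasFDerivAt
      have h2 := h1.comp_hasDerivAt u (hx u hu)
      rw [fderiv_apply_eq_dot_grad', horth] at h2
      exact h2.hasDerivWithinAt
    have key := Convex.norm_image_sub_le_of_norm_hasDerivWithin_le
      (f := fun r => f j (x r)) (f' := fun _ => 0) (C := 0)
      hderiv (fun u _ => by simp) (convex_Ioo t₁ t₂) hs ht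
    have : f j (x t) - f j (x s) = 0 := by
      have := key
      simp at this
      linarith [abs_nonneg (f j (x t) - f j (x s)), abs_le.mp (le_of_eq (rfl : |f j (x t) - f j (x s)| = |f j (x t) - f j (x s)|))]
    linarith
  · -- (ii)
    intro t ht
    set p := x t with hp
    set A := fderiv ℝ v p with hA
    have hvd : HasFDerivAt v A p :=
      (hv.differentiable one_ne_zero).differentiableAt.hasFDerivAt
    have hder : HasDerivAt (fun s => v (x s)) (A (v p)) t :=
      hvd.comp_hasDerivAt t (hx t ht)
    -- expansion of A (v p) in coordinates
    have hAv : ∀ i : Fin n, A (v p) i = ∑ k, v p k * A (Pi.single k 1) i := by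
      intro i
      have := apply_eq_sum' (A : (Fin n → ℝ) →ₗ[ℝ] (Fin n → ℝ)) (v p)
      have h := congrFun this i
      simpa [Finset.sum_apply] using h
    set w : Fin n → ℝ := fun k => grad n (fun y => (1 / 2 : ℝ) * nsq n (v y)) p k with hw
    have hwk : ∀ k, w k = ∑ i, v p i * A (Pi.single k 1) i := fun k =>
      grad_half_nsq' v hv p k
    set d : Fin n → ℝ := fun k => A (v p) k - w k with hd
    have hdotd : dot n d (v p) = 0 := by
      simp only [dot, hd]
      have e1 : ∑ k, (A (v p) k - w k) * v p k
          = ∑ k, A (v p) k * v p k - ∑ k, w k * v p k := by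
        rw [← Finset.sum_sub_distrib]
        exact Finset.sum_congr rfl fun k _ => by ring
      rw [e1]
      have e2 : ∑ k, A (v p) k * v p k = ∑ k, ∑ i, v p i * A (Pi.single i 1) k * v p k := by
        refine Finset.sum_congr rfl fun k _ => ?_
        rw [hAv k, Finset.sum_mul]
      have e3 : ∑ k, w k * v p k = ∑ k, ∑ i, v p i * A (Pi.single k 1) i * v p k := by
        refine Finset.sum_congr rfl fun k _ => ?_
        rw [hwk k, Finset.sum_mul]
      rw [e2, e3, Finset.sum_comm (s := Finset.univ) (t := Finset.univ)
        (f := fun k i => v p i * A (Pi.single k 1) i * v p k)]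
      rw [sub_eq_zero]
      refine Finset.sum_congr rfl fun k _ => Finset.sum_congr rfl fun i _ => by ring
    by_cases hvz : v p = 0
    · refine ⟨0, ?_⟩
      have hA0 : A (v p) = 0 := by rw [hvz]; simp
      have : (fun k => grad n (fun y => (1 / 2 : ℝ) * nsq n (v y)) p k
          + ∑ j, (0 : Fin (n-1) → ℝ) j * grad n (f j) p k) = A (v p) := by
        funext k
        rw [hA0]
        simp only [Pi.zero_apply, zero_mul, Finset.sum_const_zero, add_zero]
        show w k = 0
        rw [hwk k, hvz]
        simp
      rw [← this] at hder
      exact hder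
    · obtain ⟨Λ, hΛ⟩ := span_lemma' (fun j => grad n (f j) p) (hindep p) (v p) hvz
        (fun j => horth p j) d hdotd
      refine ⟨Λ, ?_⟩
      have heq : (fun k => grad n (fun y => (1 / 2 : ℝ) * nsq n (v y)) p k
          + ∑ j, Λ j * grad n (f j) p k) = A (v p) := by
        funext k
        have hdk : d k = ∑ j, Λ j * grad n (f j) p k := by
          rw [hΛ]
          simp [Finset.sum_apply]
        have h2 : A (v p) k = w k + d k := by simp [hd]
        rw [h2, hdk]
      rw [← heq] at hder
      exact hder
end
end
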